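/- arXiv:1401.0171 — 2 statements merged into one kernel-verified Lean document; each statement's English description precedes it below -/
import Mathlib

section
/- Assume the standing hypotheses on H, (Y1, Y2, X), M, H0 and (𝓕, 𝓡, W). Then for every pair (i, j) ∈ {(1,2), (1,3), (2,1)} and every y ∈ Y_i, there is an edge of H containing y, a superfluous vertex s ∈ W ∩ V_j, and a vertex u ∈ V(H0). If (Y1, Y2, X) is perfectly cromulent, then this also holds for (i, j) = (2, 3). -/
noncomputable section

attribute [local instance] Classical.propDecidable

universe u

variable {α : Type u}

/-- A 3-partite 3-uniform multihypergraph: vertex classes `V1, V2, V3` and a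
multiset of edges, each edge being a triple with one vertex in each class
(parallel edges are allowed via multiplicities). -/
structure TriSys (α : Type u) where
  V1 : Finset α
  V2 : Finset α
  V3 : Finset α
  h12 : Disjoint V1 V2
  h13 : Disjoint V1 V3
  h23 : Disjoint V2 V3
  edges : Multiset (α × α × α)
  mem1 : ∀ e ∈ edges, e.1 ∈ V1
  mem2 : ∀ e ∈ edges, e.2.1 ∈ V2
  mem3 : ∀ e ∈ edges, e.2.2 ∈ V3

/-- The vertex set of an edge. -/
def evset (e : α × α × α) : Finset α := {e.1, e.2.1, e.2.2}

/-- The coordinates of an edge, indexed by `Fin 3`. -/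
def ecoord (e : α × α × α) : Fin 3 → α := ![e.1, e.2.1, e.2.2]

namespace TriSys

def verts (H : TriSys α) : Finset α := H.V1 ∪ H.V2 ∪ H.V3

/-- The vertex classes, indexed by `Fin 3`. -/
def cls (H : TriSys α) : Fin 3 → Finset α := ![H.V1, H.V2, H.V3]

/-- A matching: a set of (pairwise vertex-disjoint) edges. -/
def IsMatching (H : TriSys α) (M : Finset (α × α × α)) : Prop :=
  (∀ e ∈ M, e ∈ H.edges) ∧
  (↑M : Set (α × α × α)).Pairwise fun e f => Disjoint (evset e) (evset f)

/-- The matching number ν. -/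
def nu (H : TriSys α) : ℕ :=
  sSup {n : ℕ | ∃ M : Finset (α × α × α), H.IsMatching M ∧ M.card = n}

/-- A vertex cover: a set of vertices meeting every edge. -/
def IsCover (H : TriSys α) (T : Finset α) : Prop :=
  ∀ e ∈ H.edges, ∃ v ∈ T, v ∈ evset e

/-- The vertex cover number τ. -/
def tau (H : TriSys α) : ℕ :=
  sInf {n : ℕ | ∃ T : Finset α, H.IsCover T ∧ T.card = n}

/-- Deletion of a set of vertices (and all edges meeting it). -/
def delete (H : TriSys α) (S : Finset α) : TriSys α where
  V1 := H.V1 \ S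
  V2 := H.V2 \ S
  V3 := H.V3 \ S
  h12 := H.h12.mono Finset.sdiff_subset Finset.sdiff_subset
  h13 := H.h13.mono Finset.sdiff_subset Finset.sdiff_subset
  h23 := H.h23.mono Finset.sdiff_subset Finset.sdiff_subset
  edges := H.edges.filter fun e => e.1 ∉ S ∧ e.2.1 ∉ S ∧ e.2.2 ∉ S
  mem1 := fun e he => by
    rw [Multiset.mem_filter] at he
    exact Finset.mem_sdiff.mpr ⟨H.mem1 e he.1, he.2.1⟩
  mem2 := fun e he => by
    rw [Multiset.mem_filter] at he
    exact Finset.mem_sdiff.mpr ⟨H.mem2 e he.1, he.2.2.1⟩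
  mem3 := fun e he => by
    rw [Multiset.mem_filter] at he
    exact Finset.mem_sdiff.mpr ⟨H.mem3 e he.1, he.2.2.2⟩

end TriSys

/-- The four edges of a truncated Fano plane on vertices `a,b,c,x,y,z`
(with classes `{a,x} ⊆ V1`, `{b,y} ⊆ V2`, `{c,z} ⊆ V3`). -/
def FanoEdges (a b c x y z : α) : Finset (α × α × α) :=
  {(a, b, c), (a, y, z), (x, b, z), (x, y, c)}

/-- The supports of the edges of `H` induced on a vertex subset `F`. -/
def inducedEdges (H : TriSys α) (F : Finset α) : Finset (α × α × α) :=
  (H.edges.filter fun e => evset e ⊆ F).toFinset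

/-- `H` induces a truncated multi-Fano plane on the six-element set `F`. -/
def IsMultiFano (H : TriSys α) (F : Finset α) : Prop :=
  ∃ a b c x y z : α,
    a ∈ H.V1 ∧ x ∈ H.V1 ∧ b ∈ H.V2 ∧ y ∈ H.V2 ∧ c ∈ H.V3 ∧ z ∈ H.V3 ∧
    a ≠ x ∧ b ≠ y ∧ c ≠ z ∧
    F = {a, b, c, x, y, z} ∧
    inducedEdges H F = FanoEdges a b c x y z

/-- The data of an FR-partition: the families `𝓕` and `𝓡` and the set `W`. -/
structure FRData (α : Type u) where
  Ffam : Finset (Finset α)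
  Rfam : Finset (Finset α)
  W : Finset α

/-- The union of the members of a family of sets. -/
def famUnion (G : Finset (Finset α)) : Finset α := G.biUnion id

/-- `(𝓕, 𝓡, W)` is an FR-partition of `H`. -/
def IsFRPartition (H : TriSys α) (P : FRData α) : Prop :=
  (∀ A ∈ P.Ffam, ∀ B ∈ P.Ffam, A ≠ B → Disjoint A B) ∧
  (∀ A ∈ P.Rfam, ∀ B ∈ P.Rfam, A ≠ B → Disjoint A B) ∧
  (∀ A ∈ P.Ffam, ∀ B ∈ P.Rfam, Disjoint A B) ∧
  (∀ A ∈ P.Ffam, Disjoint A P.W) ∧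
  (∀ B ∈ P.Rfam, Disjoint B P.W) ∧
  famUnion P.Ffam ∪ famUnion P.Rfam ∪ P.W = H.verts ∧
  (∀ A ∈ P.Ffam, IsMultiFano H A) ∧
  (∀ B ∈ P.Rfam, ∃ r1 ∈ H.V1, ∃ r2 ∈ H.V2, ∃ r3 ∈ H.V3, B = {r1, r2, r3}) ∧
  P.Ffam.card + P.Rfam.card = H.nu

/-- `w` is joined to `R` in the auxiliary bipartite graph `B_i`: some edge of
`H` contains `w` and two vertices of `R`. -/
def RAdj (H : TriSys α) (R : Finset α) (w : α) : Prop :=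
  ∃ e ∈ H.edges, w ∈ evset e ∧ 2 ≤ (evset e ∩ R).card

/-- The auxiliary bipartite graph on `Rfam` and `Wi` has a matching
saturating `Rfam`. -/
def SaturatingR (H : TriSys α) (Rfam : Finset (Finset α)) (Wi : Finset α) : Prop :=
  ∃ f : Finset α → α, Set.InjOn f ↑Rfam ∧ ∀ R ∈ Rfam, f R ∈ Wi ∧ RAdj H R (f R)

/-- Matchability of an FR-partition. -/
def IsMatchable (H : TriSys α) (P : FRData α) : Prop :=
  ∀ i : Fin 3, SaturatingR H P.Rfam (P.W ∩ H.cls i)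

/-- The edge-home property: every edge is an `F`-edge or an `R`-edge. -/
def EdgeHome (H : TriSys α) (P : FRData α) : Prop :=
  ∀ e ∈ H.edges,
    (∃ A ∈ P.Ffam, evset e ⊆ A) ∨ (∃ B ∈ P.Rfam, 2 ≤ (evset e ∩ B).card)

/-- A home-base partition: a matchable FR-partition with the edge-home
property. -/
def IsHomeBasePartition (H : TriSys α) (P : FRData α) : Prop :=
  IsFRPartition H P ∧ IsMatchable H P ∧ EdgeHome H P

/-- A home-base hypergraph: one admitting a home-base partition. -/
def IsHomeBase (H : TriSys α) : Prop :=
  ∃ P : FRData α, IsHomeBasePartition H P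

/-- The neighborhood of a family `U` of `R`'s in the auxiliary bipartite
graph with `W`-side `Wi`. -/
def RNbhd (H : TriSys α) (Wi : Finset α) (U : Finset (Finset α)) : Finset α :=
  Wi.filter fun w => ∃ R ∈ U, RAdj H R w

/-- `C` is an essential subset of `Wi` in the auxiliary bipartite graph:
`C = N(U)` for some `U ⊆ Rfam` with `|U| = |C|`. -/
def EssentialSet (H : TriSys α) (Rfam : Finset (Finset α)) (Wi : Finset α)
    (C : Finset α) : Prop :=
  ∃ U ⊆ Rfam, U.card = C.card ∧ RNbhd H Wi U = C

/-- `w` is a superfluous vertex of `Wi`: it lies in no essential subset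
(equivalently, outside the maximal essential subset). -/
def Superfluous (H : TriSys α) (Rfam : Finset (Finset α)) (Wi : Finset α)
    (w : α) : Prop :=
  w ∈ Wi ∧ ∀ C, EssentialSet H Rfam Wi C → w ∉ C

/-- `w` is a superfluous `W`-vertex of the FR-partition `P` (in its class). -/
def SuperfluousVert (H : TriSys α) (P : FRData α) (w : α) : Prop :=
  ∃ i : Fin 3, Superfluous H P.Rfam (P.W ∩ H.cls i) w

/-- `v` is an essential `W`-vertex of the FR-partition `P`. -/
def EssentialVertIn (H : TriSys α) (P : FRData α) (v : α) : Prop :=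
  ∃ i : Fin 3, EssentialSet H P.Rfam (P.W ∩ H.cls i) {v}

/-- `v` is essential for `R`: it is the unique neighbor of `R` in some `B_i`. -/
def EssentialForIn (H : TriSys α) (P : FRData α) (R : Finset α) (v : α) : Prop :=
  ∃ i : Fin 3, RNbhd H (P.W ∩ H.cls i) {R} = {v}

/-- The neighborhood, inside vertex class `j`, of a set `X` of class-`k`
vertices in the link graph of `H` over the remaining vertex class. -/
def nbr (H : TriSys α) (j k : Fin 3) (X : Finset α) : Finset α :=
  (H.cls j).filter fun v => ∃ e ∈ H.edges, ecoord e j = v ∧ ecoord e k ∈ X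

/-- A cromulent triple `(Y1, Y2, X)` with `Y1 ⊆ V_i`, `Y2 ⊆ V_j`, `X ⊆ V_k`. -/
def IsCromulent (H : TriSys α) (i j k : Fin 3) (Y1 Y2 X : Finset α) : Prop :=
  i ≠ j ∧ i ≠ k ∧ j ≠ k ∧
  Y1.Nonempty ∧ Y2.Nonempty ∧ X.Nonempty ∧
  Y1 ⊆ H.cls i ∧ Y2 ⊆ H.cls j ∧ X ⊆ H.cls k ∧
  Y1.card = Y2.card ∧ Y1.card ≤ X.card ∧
  nbr H j k X = Y2 ∧
  (∃ M : Finset (α × α × α), H.IsMatching M ∧ M.card = Y1.card ∧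
    ∀ e ∈ M, evset e ⊆ Y1 ∪ Y2 ∪ X) ∧
  IsHomeBase (H.delete (Y1 ∪ Y2 ∪ X)) ∧
  (H.delete (Y1 ∪ Y2 ∪ X)).nu + Y1.card = H.nu ∧
  ∀ P : FRData α, IsHomeBasePartition (H.delete (Y1 ∪ Y2 ∪ X)) P →
    nbr H i k X ⊆ Y1 ∪ famUnion P.Rfam ∪ famUnion P.Ffam

/-- A perfectly cromulent triple: condition (5) is strengthened to
`N_{Lk_{V_j}}(X) = Y1`. -/
def IsPerfCromulent (H : TriSys α) (i j k : Fin 3) (Y1 Y2 X : Finset α) : Prop :=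
  i ≠ j ∧ i ≠ k ∧ j ≠ k ∧
  Y1.Nonempty ∧ Y2.Nonempty ∧ X.Nonempty ∧
  Y1 ⊆ H.cls i ∧ Y2 ⊆ H.cls j ∧ X ⊆ H.cls k ∧
  Y1.card = Y2.card ∧ Y1.card ≤ X.card ∧
  nbr H j k X = Y2 ∧
  (∃ M : Finset (α × α × α), H.IsMatching M ∧ M.card = Y1.card ∧
    ∀ e ∈ M, evset e ⊆ Y1 ∪ Y2 ∪ X) ∧
  IsHomeBase (H.delete (Y1 ∪ Y2 ∪ X)) ∧
  (H.delete (Y1 ∪ Y2 ∪ X)).nu + Y1.card = H.nu ∧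
  nbr H i k X = Y1

/-- The link graph of `H` over the class other than `j, k` has a perfect
matching, encoded as a bijection from class `j` onto class `k` realized by
edges of `H`. -/
def LinkPerfectMatching (H : TriSys α) (j k : Fin 3) : Prop :=
  ∃ f : α → α, Set.InjOn f ↑(H.cls j) ∧ (H.cls j).image f = H.cls k ∧
    ∀ v ∈ H.cls j, ∃ e ∈ H.edges, ecoord e j = v ∧ ecoord e k = f v

/-- A proper FR-partition: no `R ∈ 𝓡` together with an edge consisting of
three `W`-vertices induces a truncated (multi-)Fano plane. -/
def IsProper (H : TriSys α) (P : FRData α) : Prop :=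
  ¬ ∃ R ∈ P.Rfam, ∃ e ∈ H.edges, evset e ⊆ P.W ∧ IsMultiFano H (R ∪ evset e)
-- ===== auxiliary lemmas =====

lemma RNbhd_subset (H : TriSys α) (Wi : Finset α) (U : Finset (Finset α)) :
    RNbhd H Wi U ⊆ Wi := Finset.filter_subset _ _

lemma RNbhd_mono (H : TriSys α) (Wi : Finset α) {U U' : Finset (Finset α)}
    (h : U ⊆ U') : RNbhd H Wi U ⊆ RNbhd H Wi U' := by
  intro w hw
  rw [RNbhd, Finset.mem_filter] at hw ⊢
  obtain ⟨h1, R, hR, h2⟩ := hw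
  exact ⟨h1, R, h hR, h2⟩

lemma RNbhd_union (H : TriSys α) (Wi : Finset α) (U U' : Finset (Finset α)) :
    RNbhd H Wi (U ∪ U') = RNbhd H Wi U ∪ RNbhd H Wi U' := by
  ext w
  simp only [RNbhd, Finset.mem_filter, Finset.mem_union]
  constructor
  · rintro ⟨h1, R, (h|h), h2⟩
    exacts [Or.inl ⟨h1, R, h, h2⟩, Or.inr ⟨h1, R, h, h2⟩]
  · rintro (⟨h1, R, h, h2⟩|⟨h1, R, h, h2⟩)
    exacts [⟨h1, R, Or.inl h, h2⟩, ⟨h1, R, Or.inr h, h2⟩]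

lemma hall_nbhd (H : TriSys α) (Rfam : Finset (Finset α)) (Wi : Finset α)
    (hsat : SaturatingR H Rfam Wi) (U : Finset (Finset α)) (hU : U ⊆ Rfam) :
    U.card ≤ (RNbhd H Wi U).card := by
  obtain ⟨f, hinj, hf⟩ := hsat
  have himg : U.image f ⊆ RNbhd H Wi U := by
    intro w hw
    rw [Finset.mem_image] at hw
    obtain ⟨R, hR, rfl⟩ := hw
    obtain ⟨h1, h2⟩ := hf R (hU hR)
    exact Finset.mem_filter.mpr ⟨h1, R, hR, h2⟩
  calc U.card = (U.image f).card := (Finset.card_image_of_injOn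
        (hinj.mono (by exact_mod_cast hU))).symm
    _ ≤ _ := Finset.card_le_card himg

lemma essential_union (H : TriSys α) (Rfam : Finset (Finset α)) (Wi : Finset α)
    (hsat : SaturatingR H Rfam Wi) {C1 C2 : Finset α}
    (h1 : EssentialSet H Rfam Wi C1) (h2 : EssentialSet H Rfam Wi C2) :
    EssentialSet H Rfam Wi (C1 ∪ C2) := by
  obtain ⟨U1, hU1, hc1, hn1⟩ := h1
  obtain ⟨U2, hU2, hc2, hn2⟩ := h2
  have hUu : U1 ∪ U2 ⊆ Rfam := Finset.union_subset hU1 hU2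
  have hNu : RNbhd H Wi (U1 ∪ U2) = C1 ∪ C2 := by
    rw [RNbhd_union, hn1, hn2]
  have hhall1 : (U1 ∪ U2).card ≤ (C1 ∪ C2).card := by
    rw [← hNu]; exact hall_nbhd H Rfam Wi hsat _ hUu
  have hhall2 : (U1 ∩ U2).card ≤ (C1 ∩ C2).card := by
    have hsub : RNbhd H Wi (U1 ∩ U2) ⊆ C1 ∩ C2 := by
      rw [← hn1, ← hn2]
      exact Finset.subset_inter (RNbhd_mono H Wi Finset.inter_subset_left)
        (RNbhd_mono H Wi Finset.inter_subset_right)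
    calc (U1 ∩ U2).card ≤ (RNbhd H Wi (U1 ∩ U2)).card :=
          hall_nbhd H Rfam Wi hsat _ (Finset.inter_subset_left.trans hU1)
      _ ≤ _ := Finset.card_le_card hsub
  have e1 := Finset.card_union_add_card_inter U1 U2
  have e2 := Finset.card_union_add_card_inter C1 C2
  exact ⟨U1 ∪ U2, hUu, by omega, hNu⟩

lemma exists_max_essential (H : TriSys α) (Rfam : Finset (Finset α)) (Wi : Finset α)
    (hsat : SaturatingR H Rfam Wi) :
    ∃ Cm Um, Um ⊆ Rfam ∧ Um.card = Cm.card ∧ RNbhd H Wi Um = Cm ∧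
      ∀ C, EssentialSet H Rfam Wi C → C ⊆ Cm := by
  classical
  have hsubWi : ∀ C, EssentialSet H Rfam Wi C → C ⊆ Wi := by
    rintro C ⟨U, -, -, rfl⟩; exact RNbhd_subset H Wi U
  set 𝒞 := Wi.powerset.filter (EssentialSet H Rfam Wi) with h𝒞
  have hmem : ∀ C, C ∈ 𝒞 ↔ EssentialSet H Rfam Wi C := by
    intro C
    simp only [h𝒞, Finset.mem_filter, Finset.mem_powerset]
    exact ⟨fun h => h.2, fun h => ⟨hsubWi C h, h⟩⟩
  have hne : 𝒞.Nonempty := by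
    refine ⟨∅, (hmem ∅).mpr ⟨∅, Finset.empty_subset _, by simp, ?_⟩⟩
    simp [RNbhd]
  obtain ⟨Cm, hCm, hmax⟩ := 𝒞.exists_max_image Finset.card hne
  have hCm' := (hmem Cm).mp hCm
  obtain ⟨Um, hUm, hcard, hN⟩ := hCm'
  refine ⟨Cm, Um, hUm, hcard.symm ▸ hcard, hN, ?_⟩
  · intro C hC
    have hun : EssentialSet H Rfam Wi (C ∪ Cm) :=
      essential_union H Rfam Wi hsat hC ((hmem Cm).mp hCm)
    have hle : (C ∪ Cm).card ≤ Cm.card := hmax _ ((hmem _).mpr hun)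
    have := Finset.eq_of_subset_of_card_le Finset.subset_union_right hle
    intro v hv
    rw [this]
    exact Finset.mem_union_left _ hv

lemma ecoord_mem_evset (e : α × α × α) (c : Fin 3) : ecoord e c ∈ evset e := by
  fin_cases c <;> simp [ecoord, evset]

lemma mem_cls_of_edge {H : TriSys α} {e : α × α × α} (he : e ∈ H.edges) (c : Fin 3) :
    ecoord e c ∈ H.cls c := by
  fin_cases c
  · simpa [TriSys.cls, ecoord] using H.mem1 e he
  · simpa [TriSys.cls, ecoord] using H.mem2 e he
  · simpa [TriSys.cls, ecoord] using H.mem3 e he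

lemma cls_subset_verts (H : TriSys α) (c : Fin 3) : H.cls c ⊆ H.verts := by
  fin_cases c <;> intro v hv <;>
    simp only [TriSys.cls, TriSys.verts, Finset.mem_union,
      Matrix.cons_val_zero, Matrix.cons_val_one, Matrix.head_cons,
      Matrix.cons_val_two, Matrix.tail_cons] at hv ⊢ <;> tauto

lemma cls_disjoint (H : TriSys α) {c c' : Fin 3} (h : c ≠ c') :
    Disjoint (H.cls c) (H.cls c') := by
  fin_cases c <;> fin_cases c' <;> simp_all [TriSys.cls] <;>
    first
      | exact H.h12 | exact H.h13 | exact H.h23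
      | exact H.h12.symm | exact H.h13.symm | exact H.h23.symm

lemma R_pick (H0 : TriSys α) {r1 r2 r3 : α} (h1 : r1 ∈ H0.V1) (h2 : r2 ∈ H0.V2)
    (h3 : r3 ∈ H0.V3) (c : Fin 3) :
    ∃ rc ∈ ({r1, r2, r3} : Finset α), rc ∈ H0.cls c ∧
      ∀ v ∈ ({r1, r2, r3} : Finset α), v ∈ H0.cls c → v = rc := by
  have d12 := Finset.disjoint_left.mp H0.h12
  have d13 := Finset.disjoint_left.mp H0.h13
  have d23 := Finset.disjoint_left.mp H0.h23
  have d21 := Finset.disjoint_left.mp H0.h12.symm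
  have d31 := Finset.disjoint_left.mp H0.h13.symm
  have d32 := Finset.disjoint_left.mp H0.h23.symm
  fin_cases c
  · refine ⟨r1, by simp, by simpa [TriSys.cls] using h1, ?_⟩
    intro v hv hc
    simp only [TriSys.cls, Matrix.cons_val_zero] at hc
    simp only [Finset.mem_insert, Finset.mem_singleton] at hv
    rcases hv with rfl | rfl | rfl
    · rfl
    · exact absurd hc (d21 h2)
    · exact absurd hc (d31 h3)
  · refine ⟨r2, by simp, by simpa [TriSys.cls] using h2, ?_⟩
    intro v hv hc
    simp only [TriSys.cls, Matrix.cons_val_one, Matrix.head_cons] at hc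
    simp only [Finset.mem_insert, Finset.mem_singleton] at hv
    rcases hv with rfl | rfl | rfl
    · exact absurd hc (d12 h1)
    · rfl
    · exact absurd hc (d32 h3)
  · refine ⟨r3, by simp, by simpa [TriSys.cls] using h3, ?_⟩
    intro v hv hc
    simp only [TriSys.cls, Matrix.cons_val_two, Matrix.tail_cons, Matrix.head_cons] at hc
    simp only [Finset.mem_insert, Finset.mem_singleton] at hv
    rcases hv with rfl | rfl | rfl
    · exact absurd hc (d13 h1)
    · exact absurd hc (d23 h2)
    · rfl

lemma Fano_cls_card {H0 : TriSys α} {F : Finset α} (h : IsMultiFano H0 F) (c : Fin 3) :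
    (F ∩ H0.cls c).card ≤ 2 := by
  obtain ⟨a, b, cc, x, y, z, ha, hx, hb, hy, hc3, hz, hax, hby, hcz, hFeq, -⟩ := h
  have d12 := Finset.disjoint_left.mp H0.h12
  have d13 := Finset.disjoint_left.mp H0.h13
  have d21 := Finset.disjoint_left.mp H0.h12.symm
  have d23 := Finset.disjoint_left.mp H0.h23
  have d31 := Finset.disjoint_left.mp H0.h13.symm
  have d32 := Finset.disjoint_left.mp H0.h23.symm
  fin_cases c
  · have hsub : F ∩ H0.cls 0 ⊆ {a, x} := by
      intro v hv
      rw [Finset.mem_inter, hFeq] at hv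
      obtain ⟨hv1, hv2⟩ := hv
      simp only [TriSys.cls, Matrix.cons_val_zero] at hv2
      simp only [Finset.mem_insert, Finset.mem_singleton] at hv1 ⊢
      rcases hv1 with rfl|rfl|rfl|rfl|rfl|rfl
      · exact Or.inl rfl
      · exact absurd hv2 (d21 hb)
      · exact absurd hv2 (d31 hc3)
      · exact Or.inr rfl
      · exact absurd hv2 (d21 hy)
      · exact absurd hv2 (d31 hz)
    exact (Finset.card_le_card hsub).trans ((Finset.card_insert_le _ _).trans (by simp))
  · have hsub : F ∩ H0.cls 1 ⊆ {b, y} := by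
      intro v hv
      rw [Finset.mem_inter, hFeq] at hv
      obtain ⟨hv1, hv2⟩ := hv
      simp only [TriSys.cls, Matrix.cons_val_one, Matrix.head_cons] at hv2
      simp only [Finset.mem_insert, Finset.mem_singleton] at hv1 ⊢
      rcases hv1 with rfl|rfl|rfl|rfl|rfl|rfl
      · exact absurd hv2 (d12 ha)
      · exact Or.inl rfl
      · exact absurd hv2 (d32 hc3)
      · exact absurd hv2 (d12 hx)
      · exact Or.inr rfl
      · exact absurd hv2 (d32 hz)
    exact (Finset.card_le_card hsub).trans ((Finset.card_insert_le _ _).trans (by simp))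
  · have hsub : F ∩ H0.cls 2 ⊆ {cc, z} := by
      intro v hv
      rw [Finset.mem_inter, hFeq] at hv
      obtain ⟨hv1, hv2⟩ := hv
      simp only [TriSys.cls, Matrix.cons_val_two, Matrix.tail_cons, Matrix.head_cons] at hv2
      simp only [Finset.mem_insert, Finset.mem_singleton] at hv1 ⊢
      rcases hv1 with rfl|rfl|rfl|rfl|rfl|rfl
      · exact absurd hv2 (d13 ha)
      · exact absurd hv2 (d23 hb)
      · exact Or.inl rfl
      · exact absurd hv2 (d13 hx)
      · exact absurd hv2 (d23 hy)
      · exact Or.inr rfl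
    exact (Finset.card_le_card hsub).trans ((Finset.card_insert_le _ _).trans (by simp))

lemma famUnion_inter_card_le (G : Finset (Finset α)) (Xs : Finset α) (k : ℕ)
    (h : ∀ A ∈ G, (A ∩ Xs).card ≤ k) : (famUnion G ∩ Xs).card ≤ G.card * k := by
  have hsub : famUnion G ∩ Xs ⊆ G.biUnion (fun A => A ∩ Xs) := by
    intro v hv
    rw [Finset.mem_inter] at hv
    obtain ⟨hv1, hv2⟩ := hv
    rw [famUnion, Finset.mem_biUnion] at hv1
    obtain ⟨A, hA, hvA⟩ := hv1
    exact Finset.mem_biUnion.mpr ⟨A, hA, Finset.mem_inter.mpr ⟨hvA, hv2⟩⟩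
  calc (famUnion G ∩ Xs).card ≤ (G.biUnion (fun A => A ∩ Xs)).card :=
        Finset.card_le_card hsub
    _ ≤ ∑ A ∈ G, (A ∩ Xs).card := Finset.card_biUnion_le
    _ ≤ G.card * k := by
        calc ∑ A ∈ G, (A ∩ Xs).card ≤ ∑ _A ∈ G, k := Finset.sum_le_sum h
          _ = G.card * k := by simp [mul_comm]

lemma cover_of_homebase (H0 : TriSys α) (P : FRData α)
    (hP : IsHomeBasePartition H0 P) (c : Fin 3) :
    ∃ T0 : Finset α,
      T0.card ≤ 2 * (P.Ffam.card + P.Rfam.card) ∧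
      (∀ e ∈ H0.edges, ∃ v ∈ T0, v ∈ evset e) ∧
      ((famUnion P.Ffam ∪ famUnion P.Rfam) ∩ H0.cls c ⊆ T0) ∧
      (∀ w ∈ P.W ∩ H0.cls c, ¬ Superfluous H0 P.Rfam (P.W ∩ H0.cls c) w → w ∈ T0) := by
  obtain ⟨hFRpart, hmat, hhome⟩ := hP
  obtain ⟨hFdisj, hRdisj, hFRdisj, hFW, hRW, hpart, hFano, hRstruct, hcount⟩ := hFRpart
  obtain ⟨Cm, Um, hUmsub, hUmcard, hUmN, hCmmax⟩ :=
    exists_max_essential H0 P.Rfam (P.W ∩ H0.cls c) (hmat c)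
  set c' : Fin 3 := if c = 0 then 1 else 0 with hc'def
  have hne : c ≠ c' := by fin_cases c <;> simp [hc'def]
  refine ⟨(famUnion P.Ffam ∩ H0.cls c) ∪ (famUnion P.Rfam ∩ H0.cls c) ∪
      (famUnion (P.Rfam \ Um) ∩ H0.cls c') ∪ Cm, ?_, ?_, ?_, ?_⟩
  · -- cardinality
    have bA : (famUnion P.Ffam ∩ H0.cls c).card ≤ P.Ffam.card * 2 :=
      famUnion_inter_card_le _ _ _ (fun A hA => Fano_cls_card (hFano A hA) c)
    have bB : (famUnion P.Rfam ∩ H0.cls c).card ≤ P.Rfam.card * 1 := by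
      refine famUnion_inter_card_le _ _ _ (fun R hR => ?_)
      obtain ⟨r1, hr1, r2, hr2, r3, hr3, hReq⟩ := hRstruct R hR
      obtain ⟨rc, hrcR, hrcc, hrcu⟩ := R_pick H0 hr1 hr2 hr3 c
      have : R ∩ H0.cls c ⊆ {rc} := by
        intro v hv
        rw [Finset.mem_inter] at hv
        rw [Finset.mem_singleton]
        exact hrcu v (hReq ▸ hv.1) hv.2
      simpa using Finset.card_le_card this
    have bC : (famUnion (P.Rfam \ Um) ∩ H0.cls c').card ≤ (P.Rfam \ Um).card * 1 := by
      refine famUnion_inter_card_le _ _ _ (fun R hR => ?_)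
      have hR' : R ∈ P.Rfam := (Finset.mem_sdiff.mp hR).1
      obtain ⟨r1, hr1, r2, hr2, r3, hr3, hReq⟩ := hRstruct R hR'
      obtain ⟨rc, hrcR, hrcc, hrcu⟩ := R_pick H0 hr1 hr2 hr3 c'
      have : R ∩ H0.cls c' ⊆ {rc} := by
        intro v hv
        rw [Finset.mem_inter] at hv
        rw [Finset.mem_singleton]
        exact hrcu v (hReq ▸ hv.1) hv.2
      simpa using Finset.card_le_card this
    have bsd : (P.Rfam \ Um).card = P.Rfam.card - Um.card := Finset.card_sdiff_of_subset hUmsub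
    have bU : Um.card ≤ P.Rfam.card := Finset.card_le_card hUmsub
    have t1 := Finset.card_union_le
      ((famUnion P.Ffam ∩ H0.cls c) ∪ (famUnion P.Rfam ∩ H0.cls c) ∪
        (famUnion (P.Rfam \ Um) ∩ H0.cls c')) Cm
    have t2 := Finset.card_union_le
      ((famUnion P.Ffam ∩ H0.cls c) ∪ (famUnion P.Rfam ∩ H0.cls c))
      (famUnion (P.Rfam \ Um) ∩ H0.cls c')
    have t3 := Finset.card_union_le (famUnion P.Ffam ∩ H0.cls c)
      (famUnion P.Rfam ∩ H0.cls c)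
    omega
  · -- coverage of H0-edges
    intro e he
    rcases hhome e he with ⟨F, hF, hsub⟩ | ⟨R, hR, h2⟩
    · refine ⟨ecoord e c, ?_, ecoord_mem_evset e c⟩
      have h1 : ecoord e c ∈ famUnion P.Ffam :=
        Finset.mem_biUnion.mpr ⟨F, hF, hsub (ecoord_mem_evset e c)⟩
      simp only [Finset.mem_union]
      exact Or.inl (Or.inl (Or.inl (Finset.mem_inter.mpr ⟨h1, mem_cls_of_edge he c⟩)))
    · obtain ⟨r1, hr1, r2, hr2, r3, hr3, hReq⟩ := hRstruct R hR
      obtain ⟨rc, hrcR, hrcc, hrcu⟩ := R_pick H0 hr1 hr2 hr3 c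
      by_cases hrce : rc ∈ evset e
      · refine ⟨rc, ?_, hrce⟩
        have h1 : rc ∈ famUnion P.Rfam :=
          Finset.mem_biUnion.mpr ⟨R, hR, hReq ▸ hrcR⟩
        simp only [Finset.mem_union]
        exact Or.inl (Or.inl (Or.inr (Finset.mem_inter.mpr ⟨h1, hrcc⟩)))
      · by_cases hUm : R ∈ Um
        · refine ⟨ecoord e c, ?_, ecoord_mem_evset e c⟩
          have hwv : ecoord e c ∈ H0.verts :=
            cls_subset_verts H0 c (mem_cls_of_edge he c)
          rw [← hpart] at hwv
          simp only [Finset.mem_union] at hwv ⊢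
          rcases hwv with (hw | hw) | hw
          · exact Or.inl (Or.inl (Or.inl
              (Finset.mem_inter.mpr ⟨hw, mem_cls_of_edge he c⟩)))
          · exact Or.inl (Or.inl (Or.inr
              (Finset.mem_inter.mpr ⟨hw, mem_cls_of_edge he c⟩)))
          · refine Or.inr ?_
            rw [← hUmN]
            refine Finset.mem_filter.mpr ⟨Finset.mem_inter.mpr
              ⟨hw, mem_cls_of_edge he c⟩, R, hUm, e, he, ecoord_mem_evset e c, h2⟩
        · obtain ⟨rc', hrc'R, hrc'c, hrc'u⟩ := R_pick H0 hr1 hr2 hr3 c'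
          have hrcne : rc ≠ rc' := by
            intro hcontra
            exact (Finset.disjoint_left.mp (cls_disjoint H0 hne) hrcc)
              (hcontra ▸ hrc'c)
          have hrc'e : rc' ∈ evset e := by
            by_contra hno
            have hsub2 : evset e ∩ R ⊆ R \ {rc, rc'} := by
              intro v hv
              rw [Finset.mem_inter] at hv
              refine Finset.mem_sdiff.mpr ⟨hv.2, ?_⟩
              simp only [Finset.mem_insert, Finset.mem_singleton]
              rintro (rfl | rfl)
              · exact hrce hv.1
              · exact hno hv.1
            have hpair : ({rc, rc'} : Finset α) ⊆ R := by
              intro v hv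
              simp only [Finset.mem_insert, Finset.mem_singleton] at hv
              rcases hv with rfl | rfl
              · exact hReq ▸ hrcR
              · exact hReq ▸ hrc'R
            have hpc : ({rc, rc'} : Finset α).card = 2 := by
              rw [Finset.card_insert_of_notMem (by simpa using hrcne)]
              simp
            have hRcard : R.card ≤ 3 := by
              rw [hReq]
              exact (Finset.card_insert_le _ _).trans
                (by have := Finset.card_insert_le r2 ({r3} : Finset α); rw [Finset.card_singleton] at this; omega)
            have := Finset.card_le_card hsub2
            rw [Finset.card_sdiff_of_subset hpair, hpc] at this
            omega
          refine ⟨rc', ?_, hrc'e⟩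
          have h1 : rc' ∈ famUnion (P.Rfam \ Um) :=
            Finset.mem_biUnion.mpr ⟨R, Finset.mem_sdiff.mpr ⟨hR, hUm⟩, hReq ▸ hrc'R⟩
          simp only [Finset.mem_union]
          exact Or.inl (Or.inr (Finset.mem_inter.mpr ⟨h1, hrc'c⟩))
  · -- contains F/R vertices of class c
    intro v hv
    rw [Finset.mem_inter, Finset.mem_union] at hv
    simp only [Finset.mem_union]
    rcases hv with ⟨hv1 | hv1, hv2⟩
    · exact Or.inl (Or.inl (Or.inl (Finset.mem_inter.mpr ⟨hv1, hv2⟩)))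
    · exact Or.inl (Or.inl (Or.inr (Finset.mem_inter.mpr ⟨hv1, hv2⟩)))
  · -- contains essential W-vertices of class c
    intro w hw hnsf
    rw [Superfluous] at hnsf
    push_neg at hnsf
    obtain ⟨C, hC, hwC⟩ := hnsf hw
    simp only [Finset.mem_union]
    exact Or.inr (hCmmax C hC hwC)

lemma tau_le_of_cover (H : TriSys α) {T : Finset α} (hT : H.IsCover T) :
    H.tau ≤ T.card := Nat.sInf_le ⟨T, hT, rfl⟩

/-- Under the standing hypotheses, for each pair `(i, j)` among
`(1,2), (1,3), (2,1)` and every `y ∈ Y_i`, there is an edge of `H` containing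
`y`, a superfluous vertex `s ∈ W ∩ V_j`, and a vertex `u ∈ V(H₀)`; if the
triple is perfectly cromulent this also holds for `(i, j) = (2, 3)`. -/
theorem exists_edge_through_superfluous
    (H : TriSys α) (htau : H.tau = 2 * H.nu)
    (Y1 Y2 X : Finset α)
    (hcrom : IsCromulent H 0 1 2 Y1 Y2 X)
    (M : Finset (α × α × α)) (hM : H.IsMatching M)
    (hMcard : M.card = Y1.card)
    (hMsub : ∀ e ∈ M, evset e ⊆ Y1 ∪ Y2 ∪ X)
    (P : FRData α)
    (hP : IsHomeBasePartition (H.delete (Y1 ∪ Y2 ∪ X)) P) :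
    (∀ y ∈ Y1, ∃ s u : α, (y, s, u) ∈ H.edges ∧
        Superfluous (H.delete (Y1 ∪ Y2 ∪ X)) P.Rfam
          (P.W ∩ (H.delete (Y1 ∪ Y2 ∪ X)).cls 1) s ∧
        u ∈ (H.delete (Y1 ∪ Y2 ∪ X)).verts) ∧
    (∀ y ∈ Y1, ∃ s u : α, (y, u, s) ∈ H.edges ∧
        Superfluous (H.delete (Y1 ∪ Y2 ∪ X)) P.Rfam
          (P.W ∩ (H.delete (Y1 ∪ Y2 ∪ X)).cls 2) s ∧
        u ∈ (H.delete (Y1 ∪ Y2 ∪ X)).verts) ∧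
    (∀ y ∈ Y2, ∃ s u : α, (s, y, u) ∈ H.edges ∧
        Superfluous (H.delete (Y1 ∪ Y2 ∪ X)) P.Rfam
          (P.W ∩ (H.delete (Y1 ∪ Y2 ∪ X)).cls 0) s ∧
        u ∈ (H.delete (Y1 ∪ Y2 ∪ X)).verts) ∧
    (IsPerfCromulent H 0 1 2 Y1 Y2 X →
      ∀ y ∈ Y2, ∃ s u : α, (u, y, s) ∈ H.edges ∧
        Superfluous (H.delete (Y1 ∪ Y2 ∪ X)) P.Rfam
          (P.W ∩ (H.delete (Y1 ∪ Y2 ∪ X)).cls 2) s ∧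
        u ∈ (H.delete (Y1 ∪ Y2 ∪ X)).verts) := by
  obtain ⟨-, -, -, hY1ne, hY2ne, hXne, hY1s, hY2s, hXs, hcardeq, -, hnbr, -, -, hnusum,
    hcond5⟩ := hcrom
  have hP2 := hP
  obtain ⟨⟨-, -, -, -, -, hpart, -, -, hcnt⟩, -, -⟩ := hP2
  have hY1V : Y1 ⊆ H.V1 := by simpa [TriSys.cls] using hY1s
  have hY2V : Y2 ⊆ H.V2 := by simpa [TriSys.cls] using hY2s
  have hXV : X ⊆ H.V3 := by simpa [TriSys.cls] using hXs
  have hSV1 : ∀ p ∈ H.V1, (p ∈ Y1 ∪ Y2 ∪ X ↔ p ∈ Y1) := by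
    intro p hp
    constructor
    · intro h
      rcases Finset.mem_union.mp h with h | h
      · rcases Finset.mem_union.mp h with h | h
        · exact h
        · exact absurd (hY2V h) (Finset.disjoint_left.mp H.h12 hp)
      · exact absurd (hXV h) (Finset.disjoint_left.mp H.h13 hp)
    · intro h
      exact Finset.mem_union_left _ (Finset.mem_union_left _ h)
  have hSV2 : ∀ q ∈ H.V2, (q ∈ Y1 ∪ Y2 ∪ X ↔ q ∈ Y2) := by
    intro q hq
    constructor
    · intro h
      rcases Finset.mem_union.mp h with h | h
      · rcases Finset.mem_union.mp h with h | h
        · exact absurd (hY1V h) (Finset.disjoint_left.mp H.h12.symm hq)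
        · exact h
      · exact absurd (hXV h) (Finset.disjoint_left.mp H.h23 hq)
    · intro h
      exact Finset.mem_union_left _ (Finset.mem_union_right _ h)
  have hSV3 : ∀ r ∈ H.V3, (r ∈ Y1 ∪ Y2 ∪ X ↔ r ∈ X) := by
    intro r hr
    constructor
    · intro h
      rcases Finset.mem_union.mp h with h | h
      · rcases Finset.mem_union.mp h with h | h
        · exact absurd (hY1V h) (Finset.disjoint_left.mp H.h13.symm hr)
        · exact absurd (hY2V h) (Finset.disjoint_left.mp H.h23.symm hr)
      · exact h
    · intro h
      exact Finset.mem_union_right _ h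
  have hcls0 : (H.delete (Y1 ∪ Y2 ∪ X)).cls 0 = H.V1 \ (Y1 ∪ Y2 ∪ X) := rfl
  have hcls1 : (H.delete (Y1 ∪ Y2 ∪ X)).cls 1 = H.V2 \ (Y1 ∪ Y2 ∪ X) := rfl
  have hcls2 : (H.delete (Y1 ∪ Y2 ∪ X)).cls 2 = H.V3 \ (Y1 ∪ Y2 ∪ X) := rfl
  have hvert1 : ∀ p ∈ H.V1, p ∉ Y1 → p ∈ (H.delete (Y1 ∪ Y2 ∪ X)).verts := by
    intro p hp hnp
    exact Finset.mem_union_left _ (Finset.mem_union_left _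
      (Finset.mem_sdiff.mpr ⟨hp, fun h => hnp ((hSV1 p hp).mp h)⟩))
  have hvert2 : ∀ q ∈ H.V2, q ∉ Y2 → q ∈ (H.delete (Y1 ∪ Y2 ∪ X)).verts := by
    intro q hq hnq
    exact Finset.mem_union_left _ (Finset.mem_union_right _
      (Finset.mem_sdiff.mpr ⟨hq, fun h => hnq ((hSV2 q hq).mp h)⟩))
  have hvert3 : ∀ r ∈ H.V3, r ∉ X → r ∈ (H.delete (Y1 ∪ Y2 ∪ X)).verts := by
    intro r hr hnr
    exact Finset.mem_union_right _
      (Finset.mem_sdiff.mpr ⟨hr, fun h => hnr ((hSV3 r hr).mp h)⟩)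
  have hclsmem0 : ∀ p ∈ H.V1, p ∉ Y1 → p ∈ (H.delete (Y1 ∪ Y2 ∪ X)).cls 0 := by
    intro p hp hnp
    rw [hcls0]
    exact Finset.mem_sdiff.mpr ⟨hp, fun h => hnp ((hSV1 p hp).mp h)⟩
  have hclsmem1 : ∀ q ∈ H.V2, q ∉ Y2 → q ∈ (H.delete (Y1 ∪ Y2 ∪ X)).cls 1 := by
    intro q hq hnq
    rw [hcls1]
    exact Finset.mem_sdiff.mpr ⟨hq, fun h => hnq ((hSV2 q hq).mp h)⟩
  have hclsmem2 : ∀ r ∈ H.V3, r ∉ X → r ∈ (H.delete (Y1 ∪ Y2 ∪ X)).cls 2 := by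
    intro r hr hnr
    rw [hcls2]
    exact Finset.mem_sdiff.mpr ⟨hr, fun h => hnr ((hSV3 r hr).mp h)⟩
  have hnbrmem : ∀ e ∈ H.edges, e.2.2 ∈ X → e.2.1 ∈ Y2 := by
    intro e he hr
    have : e.2.1 ∈ nbr H 1 2 X := by
      refine Finset.mem_filter.mpr ⟨by simpa [TriSys.cls] using H.mem2 e he, e, he, ?_, ?_⟩
      · simp [ecoord]
      · simpa [ecoord] using hr
    rwa [hnbr] at this
  have hnbr0 : ∀ e ∈ H.edges, e.2.2 ∈ X → e.1 ∈ nbr H 0 2 X := by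
    intro e he hr
    refine Finset.mem_filter.mpr ⟨by simpa [TriSys.cls] using H.mem1 e he, e, he, ?_, ?_⟩
    · simp [ecoord]
    · simpa [ecoord] using hr
  have hedge0 : ∀ e ∈ H.edges, e.1 ∉ Y1 → e.2.1 ∉ Y2 → e.2.2 ∉ X →
      e ∈ (H.delete (Y1 ∪ Y2 ∪ X)).edges := by
    intro e he h1 h2 h3
    refine Multiset.mem_filter.mpr ⟨he, ?_, ?_, ?_⟩
    · exact fun h => h1 ((hSV1 _ (H.mem1 e he)).mp h)
    · exact fun h => h2 ((hSV2 _ (H.mem2 e he)).mp h)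
    · exact fun h => h3 ((hSV3 _ (H.mem3 e he)).mp h)
  have key : ∀ (T0 A : Finset α), A.card + 1 ≤ 2 * Y1.card →
      T0.card ≤ 2 * (P.Ffam.card + P.Rfam.card) → H.IsCover (A ∪ T0) → False := by
    intro T0 A hA hT0 hcov
    have h1 := tau_le_of_cover H hcov
    have h2 := Finset.card_union_le A T0
    omega
  have hAcard : ∀ y ∈ Y1, (Y1.erase y ∪ Y2).card + 1 ≤ 2 * Y1.card := by
    intro y hy
    have h1 := Finset.card_union_le (Y1.erase y) Y2
    have h2 := Finset.card_erase_of_mem hy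
    have h3 : 0 < Y1.card := Finset.card_pos.mpr ⟨y, hy⟩
    omega
  have hAcard' : ∀ y ∈ Y2, (Y1 ∪ Y2.erase y).card + 1 ≤ 2 * Y1.card := by
    intro y hy
    have h1 := Finset.card_union_le Y1 (Y2.erase y)
    have h2 := Finset.card_erase_of_mem hy
    have h3 : 0 < Y2.card := Finset.card_pos.mpr ⟨y, hy⟩
    omega
  refine ⟨?_, ?_, ?_, ?_⟩
  · -- case (1,2)
    intro y hy
    by_contra hno
    push_neg at hno
    obtain ⟨T0, hT0card, hT0cov, hT0FR, hT0ess⟩ :=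
      cover_of_homebase (H.delete (Y1 ∪ Y2 ∪ X)) P hP 1
    refine key T0 (Y1.erase y ∪ Y2) (hAcard y hy) hT0card ?_
    intro e he
    by_cases hq2 : e.2.1 ∈ Y2
    · exact ⟨e.2.1, Finset.mem_union_left _ (Finset.mem_union_right _ hq2),
        by simp [evset]⟩
    by_cases hr3 : e.2.2 ∈ X
    · exact absurd (hnbrmem e he hr3) hq2
    by_cases hp1 : e.1 ∈ Y1
    · by_cases hpy : e.1 = y
      · have hqv : e.2.1 ∈ (H.delete (Y1 ∪ Y2 ∪ X)).verts :=
          hvert2 _ (H.mem2 e he) hq2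
        have hrv : e.2.2 ∈ (H.delete (Y1 ∪ Y2 ∪ X)).verts :=
          hvert3 _ (H.mem3 e he) hr3
        have hqcls : e.2.1 ∈ (H.delete (Y1 ∪ Y2 ∪ X)).cls 1 :=
          hclsmem1 _ (H.mem2 e he) hq2
        have hq0 : e.2.1 ∈ famUnion P.Ffam ∪ famUnion P.Rfam ∪ P.W := by
          rw [hpart]; exact hqv
        rcases Finset.mem_union.mp hq0 with hq0 | hqW
        · exact ⟨e.2.1, Finset.mem_union_right _
            (hT0FR (Finset.mem_inter.mpr ⟨hq0, hqcls⟩)), by simp [evset]⟩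
        · have hnsf : ¬ Superfluous (H.delete (Y1 ∪ Y2 ∪ X)) P.Rfam
              (P.W ∩ (H.delete (Y1 ∪ Y2 ∪ X)).cls 1) e.2.1 := by
            intro hsf
            exact hno e.2.1 e.2.2 (by rw [← hpy]; exact he) hsf hrv
          exact ⟨e.2.1, Finset.mem_union_right _
            (hT0ess _ (Finset.mem_inter.mpr ⟨hqW, hqcls⟩) hnsf), by simp [evset]⟩
      · exact ⟨e.1, Finset.mem_union_left _ (Finset.mem_union_left _
          (Finset.mem_erase.mpr ⟨hpy, hp1⟩)), by simp [evset]⟩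
    · obtain ⟨v, hv, hve⟩ := hT0cov e (hedge0 e he hp1 hq2 hr3)
      exact ⟨v, Finset.mem_union_right _ hv, hve⟩
  · -- case (1,3)
    intro y hy
    by_contra hno
    push_neg at hno
    obtain ⟨T0, hT0card, hT0cov, hT0FR, hT0ess⟩ :=
      cover_of_homebase (H.delete (Y1 ∪ Y2 ∪ X)) P hP 2
    refine key T0 (Y1.erase y ∪ Y2) (hAcard y hy) hT0card ?_
    intro e he
    by_cases hq2 : e.2.1 ∈ Y2
    · exact ⟨e.2.1, Finset.mem_union_left _ (Finset.mem_union_right _ hq2),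
        by simp [evset]⟩
    by_cases hr3 : e.2.2 ∈ X
    · exact absurd (hnbrmem e he hr3) hq2
    by_cases hp1 : e.1 ∈ Y1
    · by_cases hpy : e.1 = y
      · have hqv : e.2.1 ∈ (H.delete (Y1 ∪ Y2 ∪ X)).verts :=
          hvert2 _ (H.mem2 e he) hq2
        have hrcls : e.2.2 ∈ (H.delete (Y1 ∪ Y2 ∪ X)).cls 2 :=
          hclsmem2 _ (H.mem3 e he) hr3
        have hrv : e.2.2 ∈ (H.delete (Y1 ∪ Y2 ∪ X)).verts :=
          hvert3 _ (H.mem3 e he) hr3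
        have hr0 : e.2.2 ∈ famUnion P.Ffam ∪ famUnion P.Rfam ∪ P.W := by
          rw [hpart]; exact hrv
        rcases Finset.mem_union.mp hr0 with hr0 | hrW
        · exact ⟨e.2.2, Finset.mem_union_right _
            (hT0FR (Finset.mem_inter.mpr ⟨hr0, hrcls⟩)), by simp [evset]⟩
        · have hnsf : ¬ Superfluous (H.delete (Y1 ∪ Y2 ∪ X)) P.Rfam
              (P.W ∩ (H.delete (Y1 ∪ Y2 ∪ X)).cls 2) e.2.2 := by
            intro hsf
            exact hno e.2.2 e.2.1 (by rw [← hpy]; exact he) hsf hqv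
          exact ⟨e.2.2, Finset.mem_union_right _
            (hT0ess _ (Finset.mem_inter.mpr ⟨hrW, hrcls⟩) hnsf), by simp [evset]⟩
      · exact ⟨e.1, Finset.mem_union_left _ (Finset.mem_union_left _
          (Finset.mem_erase.mpr ⟨hpy, hp1⟩)), by simp [evset]⟩
    · obtain ⟨v, hv, hve⟩ := hT0cov e (hedge0 e he hp1 hq2 hr3)
      exact ⟨v, Finset.mem_union_right _ hv, hve⟩
  · -- case (2,1)
    intro y hy
    by_contra hno
    push_neg at hno
    obtain ⟨T0, hT0card, hT0cov, hT0FR, hT0ess⟩ :=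
      cover_of_homebase (H.delete (Y1 ∪ Y2 ∪ X)) P hP 0
    refine key T0 (Y1 ∪ Y2.erase y) (hAcard' y hy) hT0card ?_
    intro e he
    by_cases hp1 : e.1 ∈ Y1
    · exact ⟨e.1, Finset.mem_union_left _ (Finset.mem_union_left _ hp1),
        by simp [evset]⟩
    by_cases hq2 : e.2.1 ∈ Y2
    · by_cases hqy : e.2.1 = y
      · have hpcls : e.1 ∈ (H.delete (Y1 ∪ Y2 ∪ X)).cls 0 :=
          hclsmem0 _ (H.mem1 e he) hp1
        by_cases hr3 : e.2.2 ∈ X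
        · have h5 := hcond5 P hP (hnbr0 e he hr3)
          rcases Finset.mem_union.mp h5 with h5 | h5
          · rcases Finset.mem_union.mp h5 with h5 | h5
            · exact absurd h5 hp1
            · exact ⟨e.1, Finset.mem_union_right _ (hT0FR (Finset.mem_inter.mpr
                ⟨Finset.mem_union_right _ h5, hpcls⟩)), by simp [evset]⟩
          · exact ⟨e.1, Finset.mem_union_right _ (hT0FR (Finset.mem_inter.mpr
              ⟨Finset.mem_union_left _ h5, hpcls⟩)), by simp [evset]⟩
        · have hrv : e.2.2 ∈ (H.delete (Y1 ∪ Y2 ∪ X)).verts :=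
            hvert3 _ (H.mem3 e he) hr3
          have hpv : e.1 ∈ (H.delete (Y1 ∪ Y2 ∪ X)).verts :=
            hvert1 _ (H.mem1 e he) hp1
          have hp0 : e.1 ∈ famUnion P.Ffam ∪ famUnion P.Rfam ∪ P.W := by
            rw [hpart]; exact hpv
          rcases Finset.mem_union.mp hp0 with hp0 | hpW
          · exact ⟨e.1, Finset.mem_union_right _
              (hT0FR (Finset.mem_inter.mpr ⟨hp0, hpcls⟩)), by simp [evset]⟩
          · have hnsf : ¬ Superfluous (H.delete (Y1 ∪ Y2 ∪ X)) P.Rfam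
                (P.W ∩ (H.delete (Y1 ∪ Y2 ∪ X)).cls 0) e.1 := by
              intro hsf
              exact hno e.1 e.2.2 (by rw [← hqy]; exact he) hsf hrv
            exact ⟨e.1, Finset.mem_union_right _
              (hT0ess _ (Finset.mem_inter.mpr ⟨hpW, hpcls⟩) hnsf), by simp [evset]⟩
      · exact ⟨e.2.1, Finset.mem_union_left _ (Finset.mem_union_right _
          (Finset.mem_erase.mpr ⟨hqy, hq2⟩)), by simp [evset]⟩
    · by_cases hr3 : e.2.2 ∈ X
      · exact absurd (hnbrmem e he hr3) hq2
      · obtain ⟨v, hv, hve⟩ := hT0cov e (hedge0 e he hp1 hq2 hr3)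
        exact ⟨v, Finset.mem_union_right _ hv, hve⟩
  · -- case (2,3), perfectly cromulent
    intro hperf y hy
    obtain ⟨-, -, -, -, -, -, -, -, -, -, -, -, -, -, -, hpn⟩ := hperf
    by_contra hno
    push_neg at hno
    obtain ⟨T0, hT0card, hT0cov, hT0FR, hT0ess⟩ :=
      cover_of_homebase (H.delete (Y1 ∪ Y2 ∪ X)) P hP 2
    refine key T0 (Y1 ∪ Y2.erase y) (hAcard' y hy) hT0card ?_
    intro e he
    by_cases hp1 : e.1 ∈ Y1
    · exact ⟨e.1, Finset.mem_union_left _ (Finset.mem_union_left _ hp1),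
        by simp [evset]⟩
    by_cases hq2 : e.2.1 ∈ Y2
    · by_cases hqy : e.2.1 = y
      · by_cases hr3 : e.2.2 ∈ X
        · have h5 : e.1 ∈ Y1 := by rw [← hpn]; exact hnbr0 e he hr3
          exact absurd h5 hp1
        · have hpv : e.1 ∈ (H.delete (Y1 ∪ Y2 ∪ X)).verts :=
            hvert1 _ (H.mem1 e he) hp1
          have hrcls : e.2.2 ∈ (H.delete (Y1 ∪ Y2 ∪ X)).cls 2 :=
            hclsmem2 _ (H.mem3 e he) hr3
          have hrv : e.2.2 ∈ (H.delete (Y1 ∪ Y2 ∪ X)).verts :=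
            hvert3 _ (H.mem3 e he) hr3
          have hr0 : e.2.2 ∈ famUnion P.Ffam ∪ famUnion P.Rfam ∪ P.W := by
            rw [hpart]; exact hrv
          rcases Finset.mem_union.mp hr0 with hr0 | hrW
          · exact ⟨e.2.2, Finset.mem_union_right _
              (hT0FR (Finset.mem_inter.mpr ⟨hr0, hrcls⟩)), by simp [evset]⟩
          · have hnsf : ¬ Superfluous (H.delete (Y1 ∪ Y2 ∪ X)) P.Rfam
                (P.W ∩ (H.delete (Y1 ∪ Y2 ∪ X)).cls 2) e.2.2 := by
              intro hsf
              exact hno e.2.2 e.1 (by rw [← hqy]; exact he) hsf hpv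
            exact ⟨e.2.2, Finset.mem_union_right _
              (hT0ess _ (Finset.mem_inter.mpr ⟨hrW, hrcls⟩) hnsf), by simp [evset]⟩
      · exact ⟨e.2.1, Finset.mem_union_left _ (Finset.mem_union_right _
          (Finset.mem_erase.mpr ⟨hqy, hq2⟩)), by simp [evset]⟩
    · by_cases hr3 : e.2.2 ∈ X
      · exact absurd (hnbrmem e he hr3) hq2
      · obtain ⟨v, hv, hve⟩ := hT0cov e (hedge0 e he hp1 hq2 hr3)
        exact ⟨v, Finset.mem_union_right _ hv, hve⟩
end
end

section
/- Let H be a 3-partite 3-graph with ν(H) = 1 and τ(H) = 2. Then H is a home-base hypergraph. -/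
noncomputable section

attribute [local instance] Classical.propDecidable

universe u

variable {α : Type u}

section AuxBase

lemma mem_evset' {v : α} {e : α × α × α} :
    v ∈ evset e ↔ v = e.1 ∨ v = e.2.1 ∨ v = e.2.2 := by
  simp [evset]

variable (H : TriSys α)

lemma ne12' {v w : α} (hv : v ∈ H.V1) (hw : w ∈ H.V2) : v ≠ w :=
  fun h => Finset.disjoint_left.mp H.h12 hv (h ▸ hw)

lemma ne13' {v w : α} (hv : v ∈ H.V1) (hw : w ∈ H.V3) : v ≠ w :=
  fun h => Finset.disjoint_left.mp H.h13 hv (h ▸ hw)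

lemma ne23' {v w : α} (hv : v ∈ H.V2) (hw : w ∈ H.V3) : v ≠ w :=
  fun h => Finset.disjoint_left.mp H.h23 hv (h ▸ hw)

lemma evset_disjoint' {e f : α × α × α} (he : e ∈ H.edges) (hf : f ∈ H.edges)
    (h1 : e.1 ≠ f.1) (h2 : e.2.1 ≠ f.2.1) (h3 : e.2.2 ≠ f.2.2) :
    Disjoint (evset e) (evset f) := by
  have he1 := H.mem1 e he; have he2 := H.mem2 e he; have he3 := H.mem3 e he
  have hf1 := H.mem1 f hf; have hf2 := H.mem2 f hf; have hf3 := H.mem3 f hf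
  rw [Finset.disjoint_left]
  intro v hv hv'
  rcases mem_evset'.mp hv with rfl | rfl | rfl <;>
    rcases mem_evset'.mp hv' with h | h | h
  · exact h1 h
  · exact ne12' H he1 hf2 h
  · exact ne13' H he1 hf3 h
  · exact ne12' H hf1 he2 h.symm
  · exact h2 h
  · exact ne23' H he2 hf3 h
  · exact ne13' H hf1 he3 h.symm
  · exact ne23' H hf2 he3 h.symm
  · exact h3 h

lemma matching_card_le' {M : Finset (α × α × α)} (hM : H.IsMatching M) :
    M.card ≤ H.V1.card := by
  have hinj : Set.InjOn (fun e : α × α × α => e.1) ↑M := by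
    intro e he f hf hef
    by_contra hne
    have hd := hM.2 he hf hne
    have h1 : e.1 ∈ evset e := by simp [evset]
    have h2 : e.1 ∈ evset f := by
      have hef' : e.1 = f.1 := hef
      rw [hef']; simp [evset]
    exact Finset.disjoint_left.mp hd h1 h2
  calc M.card = (M.image (fun e => e.1)).card :=
        (Finset.card_image_of_injOn hinj).symm
    _ ≤ H.V1.card := Finset.card_le_card (by
        intro v hv
        obtain ⟨e, he, rfl⟩ := Finset.mem_image.mp hv
        exact H.mem1 e (hM.1 e he))

lemma intersecting' (hnu : H.nu = 1) :
    ∀ e ∈ H.edges, ∀ f ∈ H.edges, e.1 = f.1 ∨ e.2.1 = f.2.1 ∨ e.2.2 = f.2.2 := by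
  intro e he f hf
  by_contra hcon
  push_neg at hcon
  obtain ⟨h1, h2, h3⟩ := hcon
  have hef : e ≠ f := fun h => h1 (by rw [h])
  have hd := evset_disjoint' H he hf h1 h2 h3
  have hM : H.IsMatching {e, f} := by
    constructor
    · intro g hg
      rcases Finset.mem_insert.mp hg with rfl | hg
      · exact he
      · rw [Finset.mem_singleton] at hg; subst hg; exact hf
    · intro g hg g' hg' hne
      simp only [Finset.coe_insert, Set.mem_insert_iff, Finset.coe_singleton,
        Set.mem_singleton_iff] at hg hg'
      rcases hg with rfl | rfl <;> rcases hg' with rfl | rfl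
      · exact absurd rfl hne
      · exact hd
      · exact hd.symm
      · exact absurd rfl hne
  have h2mem : (2 : ℕ) ∈ {n : ℕ | ∃ M : Finset (α × α × α), H.IsMatching M ∧ M.card = n} :=
    ⟨{e, f}, hM, by
      rw [Finset.card_insert_of_notMem (by simpa using hef), Finset.card_singleton]⟩
  have hb : BddAbove {n : ℕ | ∃ M : Finset (α × α × α), H.IsMatching M ∧ M.card = n} := by
    refine ⟨H.V1.card, ?_⟩
    rintro n ⟨M, hM, rfl⟩
    exact matching_card_le' H hM
  have hle : (2 : ℕ) ≤ H.nu := le_csSup hb h2mem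
  omega

lemma exists_edge' (htau : H.tau = 2) : ∃ e, e ∈ H.edges := by
  by_contra h
  push_neg at h
  have hc : H.IsCover ∅ := fun e he => absurd he (h e)
  have hle : H.tau ≤ 0 := Nat.sInf_le ⟨∅, hc, rfl⟩
  omega

lemma nocov' (htau : H.tau = 2) (v : α) : ∃ e ∈ H.edges, v ∉ evset e := by
  by_contra h
  push_neg at h
  have hc : H.IsCover {v} := fun e he => ⟨v, Finset.mem_singleton_self v, h e he⟩
  have hle : H.tau ≤ 1 := Nat.sInf_le ⟨{v}, hc, Finset.card_singleton v⟩
  omega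

lemma two_mem' {s : Finset α} {u v : α} (hu : u ∈ s) (hv : v ∈ s) (huv : u ≠ v) :
    2 ≤ s.card :=
  Finset.one_lt_card.mpr ⟨u, hu, v, hv, huv⟩

end AuxBase


section Constructions

variable (H : TriSys α)

lemma cls_zero' : H.cls 0 = H.V1 := rfl
lemma cls_one' : H.cls 1 = H.V2 := rfl
lemma cls_two' : H.cls 2 = H.V3 := rfl

lemma mem_verts1' {v : α} (hv : v ∈ H.V1) : v ∈ H.verts := by
  simp [TriSys.verts]; tauto
lemma mem_verts2' {v : α} (hv : v ∈ H.V2) : v ∈ H.verts := by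
  simp [TriSys.verts]; tauto
lemma mem_verts3' {v : α} (hv : v ∈ H.V3) : v ∈ H.verts := by
  simp [TriSys.verts]; tauto

lemma homebase_R' (hnu : H.nu = 1) {r1 r2 r3 : α}
    (h1 : r1 ∈ H.V1) (h2 : r2 ∈ H.V2) (h3 : r3 ∈ H.V3)
    (hcov : ∀ e ∈ H.edges, 2 ≤ (evset e ∩ ({r1, r2, r3} : Finset α)).card)
    {w1 w2 w3 : α}
    (hw1 : w1 ∈ H.V1) (hw2 : w2 ∈ H.V2) (hw3 : w3 ∈ H.V3)
    (hn1 : w1 ≠ r1) (hn2 : w2 ≠ r2) (hn3 : w3 ≠ r3)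
    (ha1 : RAdj H {r1, r2, r3} w1) (ha2 : RAdj H {r1, r2, r3} w2)
    (ha3 : RAdj H {r1, r2, r3} w3) :
    IsHomeBase H := by
  set R : Finset α := {r1, r2, r3} with hR
  have hRsub : R ⊆ H.verts := by
    intro v hv
    rw [hR] at hv
    simp only [Finset.mem_insert, Finset.mem_singleton] at hv
    rcases hv with rfl | rfl | rfl
    · exact mem_verts1' H h1
    · exact mem_verts2' H h2
    · exact mem_verts3' H h3
  have hw1R : w1 ∉ R := by
    rw [hR]
    simp only [Finset.mem_insert, Finset.mem_singleton]
    push_neg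
    exact ⟨hn1, ne12' H hw1 h2, ne13' H hw1 h3⟩
  have hw2R : w2 ∉ R := by
    rw [hR]
    simp only [Finset.mem_insert, Finset.mem_singleton]
    push_neg
    exact ⟨fun h => ne12' H h1 hw2 h.symm, hn2, ne23' H hw2 h3⟩
  have hw3R : w3 ∉ R := by
    rw [hR]
    simp only [Finset.mem_insert, Finset.mem_singleton]
    push_neg
    exact ⟨fun h => ne13' H h1 hw3 h.symm, fun h => ne23' H h2 hw3 h.symm, hn3⟩
  refine ⟨⟨∅, {R}, H.verts \ R⟩, ⟨?_, ?_, ?_, ?_, ?_, ?_, ?_, ?_, ?_⟩, ?_, ?_⟩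
  · intro A hA; exact absurd hA (Finset.notMem_empty A)
  · intro A hA B hB hne
    rw [Finset.mem_singleton] at hA hB
    subst hA; subst hB
    exact absurd rfl hne
  · intro A hA; exact absurd hA (Finset.notMem_empty A)
  · intro A hA; exact absurd hA (Finset.notMem_empty A)
  · intro B hB
    rw [Finset.mem_singleton] at hB
    subst hB
    exact Finset.disjoint_sdiff
  · show famUnion ∅ ∪ famUnion {R} ∪ (H.verts \ R) = H.verts
    have : famUnion ({R} : Finset (Finset α)) = R := by simp [famUnion]
    rw [this, show famUnion (∅ : Finset (Finset α)) = ∅ by simp [famUnion],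
      Finset.empty_union]
    exact Finset.union_sdiff_of_subset hRsub
  · intro A hA; exact absurd hA (Finset.notMem_empty A)
  · intro B hB
    rw [Finset.mem_singleton] at hB
    subst hB
    exact ⟨r1, h1, r2, h2, r3, h3, rfl⟩
  · show (∅ : Finset (Finset α)).card + ({R} : Finset (Finset α)).card = H.nu
    simp [hnu]
  · -- matchable
    intro i
    fin_cases i
    · refine ⟨fun _ => w1, ?_, ?_⟩
      · intro p hp q hq _
        simp only [Finset.coe_singleton, Set.mem_singleton_iff] at hp hq
        rw [hp, hq]
      · intro B hB
        rw [Finset.mem_singleton] at hB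
        subst hB
        refine ⟨Finset.mem_inter.mpr ⟨Finset.mem_sdiff.mpr ⟨mem_verts1' H hw1, hw1R⟩, ?_⟩, ha1⟩
        exact hw1
    · refine ⟨fun _ => w2, ?_, ?_⟩
      · intro p hp q hq _
        simp only [Finset.coe_singleton, Set.mem_singleton_iff] at hp hq
        rw [hp, hq]
      · intro B hB
        rw [Finset.mem_singleton] at hB
        subst hB
        refine ⟨Finset.mem_inter.mpr ⟨Finset.mem_sdiff.mpr ⟨mem_verts2' H hw2, hw2R⟩, ?_⟩, ha2⟩
        exact hw2
    · refine ⟨fun _ => w3, ?_, ?_⟩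
      · intro p hp q hq _
        simp only [Finset.coe_singleton, Set.mem_singleton_iff] at hp hq
        rw [hp, hq]
      · intro B hB
        rw [Finset.mem_singleton] at hB
        subst hB
        refine ⟨Finset.mem_inter.mpr ⟨Finset.mem_sdiff.mpr ⟨mem_verts3' H hw3, hw3R⟩, ?_⟩, ha3⟩
        exact hw3
  · -- edge home
    intro e he
    exact Or.inr ⟨R, Finset.mem_singleton_self R, hcov e he⟩

lemma homebase_F' (hnu : H.nu = 1) {F : Finset α}
    (hmf : IsMultiFano H F) (hall : ∀ e ∈ H.edges, evset e ⊆ F) :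
    IsHomeBase H := by
  obtain ⟨a, b, c, x, y, z, ha, hx, hb, hy, hc, hz, _, _, _, hF, _⟩ := hmf
  have hFsub : F ⊆ H.verts := by
    intro v hv
    rw [hF] at hv
    simp only [Finset.mem_insert, Finset.mem_singleton] at hv
    rcases hv with rfl | rfl | rfl | rfl | rfl | rfl
    · exact mem_verts1' H ha
    · exact mem_verts2' H hb
    · exact mem_verts3' H hc
    · exact mem_verts1' H hx
    · exact mem_verts2' H hy
    · exact mem_verts3' H hz
  refine ⟨⟨{F}, ∅, H.verts \ F⟩, ⟨?_, ?_, ?_, ?_, ?_, ?_, ?_, ?_, ?_⟩, ?_, ?_⟩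
  · intro A hA B hB hne
    rw [Finset.mem_singleton] at hA hB
    subst hA; subst hB
    exact absurd rfl hne
  · intro A hA; exact absurd hA (Finset.notMem_empty A)
  · intro A hA B hB; exact absurd hB (Finset.notMem_empty B)
  · intro A hA
    rw [Finset.mem_singleton] at hA
    subst hA
    exact Finset.disjoint_sdiff
  · intro B hB; exact absurd hB (Finset.notMem_empty B)
  · show famUnion {F} ∪ famUnion ∅ ∪ (H.verts \ F) = H.verts
    have h1 : famUnion ({F} : Finset (Finset α)) = F := by simp [famUnion]
    rw [h1, show famUnion (∅ : Finset (Finset α)) = ∅ by simp [famUnion],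
      Finset.union_empty]
    exact Finset.union_sdiff_of_subset hFsub
  · intro A hA
    rw [Finset.mem_singleton] at hA
    subst hA
    exact ⟨a, b, c, x, y, z, ha, hx, hb, hy, hc, hz, ‹a ≠ x›, ‹b ≠ y›, ‹c ≠ z›, hF, ‹_›⟩
  · intro B hB; exact absurd hB (Finset.notMem_empty B)
  · show ({F} : Finset (Finset α)).card + (∅ : Finset (Finset α)).card = H.nu
    simp [hnu]
  · intro i
    refine ⟨fun _ => a, ?_, ?_⟩
    · intro p hp; simp at hp
    · intro B hB; exact absurd hB (Finset.notMem_empty B)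
  · intro e he
    exact Or.inl ⟨F, Finset.mem_singleton_self F, hall e he⟩

end Constructions

/-- A 3-partite 3-graph with `ν(H) = 1` and `τ(H) = 2` is a home-base
hypergraph. -/
theorem base_case_nu_one (H : TriSys α) (hnu : H.nu = 1) (htau : H.tau = 2) :
    IsHomeBase H := by
  obtain ⟨e0, he0⟩ := exists_edge' H htau
  obtain ⟨a, b, c⟩ := e0
  have ha : a ∈ H.V1 := H.mem1 _ he0
  have hb : b ∈ H.V2 := H.mem2 _ he0
  have hc : c ∈ H.V3 := H.mem3 _ he0
  have hsh := intersecting' H hnu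
  by_cases hA : ∀ f ∈ H.edges, 2 ≤ (evset f ∩ ({a, b, c} : Finset α)).card
  · -- Case A : R = {a,b,c}
    obtain ⟨g1, hg1, hg1a⟩ := nocov' H htau a
    obtain ⟨g2, hg2, hg2b⟩ := nocov' H htau b
    obtain ⟨g3, hg3, hg3c⟩ := nocov' H htau c
    have hn1 : g1.1 ≠ a := fun h => hg1a (mem_evset'.mpr (Or.inl h.symm))
    have hn2 : g2.2.1 ≠ b := fun h => hg2b (mem_evset'.mpr (Or.inr (Or.inl h.symm)))
    have hn3 : g3.2.2 ≠ c := fun h => hg3c (mem_evset'.mpr (Or.inr (Or.inr h.symm)))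
    exact homebase_R' H hnu ha hb hc hA (H.mem1 _ hg1) (H.mem2 _ hg2) (H.mem3 _ hg3)
      hn1 hn2 hn3
      ⟨g1, hg1, mem_evset'.mpr (Or.inl rfl), hA g1 hg1⟩
      ⟨g2, hg2, mem_evset'.mpr (Or.inr (Or.inl rfl)), hA g2 hg2⟩
      ⟨g3, hg3, mem_evset'.mpr (Or.inr (Or.inr rfl)), hA g3 hg3⟩
  · -- Case B : some edge meets {a,b,c} in exactly one vertex
    push_neg at hA
    obtain ⟨f0, hf0, hflt⟩ := hA
    obtain ⟨p, q, r⟩ := f0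
    have hone := Finset.card_le_one.mp (Nat.lt_succ_iff.mp hflt)
    have hone' : ∀ u v : α, u ∈ evset (p, q, r) → u ∈ ({a, b, c} : Finset α) →
        v ∈ evset (p, q, r) → v ∈ ({a, b, c} : Finset α) → u = v :=
      fun u v h1 h2 h3 h4 =>
        hone u (Finset.mem_inter.mpr ⟨h1, h2⟩) v (Finset.mem_inter.mpr ⟨h3, h4⟩)
    rcases hsh (a, b, c) he0 (p, q, r) hf0 with hco | hco | hco
    · -- B1 : shared vertex in class 1, f0 = (a, q, r)
      have hpa : a = p := hco
      subst hpa
      have hqb : q ≠ b := fun h =>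
        ne12' H ha hb
          (hone' a b (mem_evset'.mpr (Or.inl rfl)) (by simp)
            (mem_evset'.mpr (Or.inr (Or.inl h.symm))) (by simp))
      have hrc : r ≠ c := fun h =>
        ne13' H ha hc
          (hone' a c (mem_evset'.mpr (Or.inl rfl)) (by simp)
            (mem_evset'.mpr (Or.inr (Or.inr h.symm))) (by simp))
      have hy2 : q ∈ H.V2 := H.mem2 _ hf0
      have hz3 : r ∈ H.V3 := H.mem3 _ hf0
      have hclass : ∀ g ∈ H.edges, g.1 ≠ a →
          (g.2.1 = b ∧ g.2.2 = r) ∨ (g.2.1 = q ∧ g.2.2 = c) := by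
        intro g hg hga
        rcases hsh g hg (a, b, c) he0 with h1 | h1 | h1
        · exact absurd h1 hga
        · refine Or.inl ⟨h1, ?_⟩
          rcases hsh g hg (a, q, r) hf0 with h2 | h2 | h2
          · exact absurd h2 hga
          · exact absurd (h1.symm.trans h2).symm hqb
          · exact h2
        · rcases hsh g hg (a, q, r) hf0 with h2 | h2 | h2
          · exact absurd h2 hga
          · exact Or.inr ⟨h2, h1⟩
          · exact absurd (h1.symm.trans h2).symm hrc
      by_cases ht1 : ∃ g ∈ H.edges, g.1 ≠ a ∧ g.2.1 = b
      · obtain ⟨g1, hg1, hg1a, hg1b⟩ := ht1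
        obtain ⟨x1, s1, t1⟩ := g1
        have hs1 : b = s1 := (hg1b : s1 = b).symm
        subst hs1
        have ht1r : r = t1 := by
          rcases hclass (x1, b, t1) hg1 hg1a with ⟨_, h'⟩ | ⟨h', _⟩
          · exact (h' : t1 = r).symm
          · exact absurd (h' : b = q).symm hqb
        subst ht1r
        have hx1V : x1 ∈ H.V1 := H.mem1 _ hg1
        have hx1a : x1 ≠ a := hg1a
        by_cases ht2 : ∃ g ∈ H.edges, g.1 ≠ a ∧ g.2.1 = q
        · -- Fano case
          obtain ⟨g2, hg2, hg2a, hg2q⟩ := ht2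
          obtain ⟨x2, s2, t2⟩ := g2
          have hs2 : q = s2 := (hg2q : s2 = q).symm
          subst hs2
          have ht2c : c = t2 := by
            rcases hclass (x2, q, t2) hg2 hg2a with ⟨h', _⟩ | ⟨_, h'⟩
            · exact absurd (h' : q = b) hqb
            · exact (h' : t2 = c).symm
          subst ht2c
          have hx12 : x1 = x2 := by
            rcases hsh (x1, b, r) hg1 (x2, q, c) hg2 with h' | h' | h'
            · exact h'
            · exact absurd (h' : b = q).symm hqb
            · exact absurd (h' : r = c) hrc
          subst hx12
          have hcl4 : ∀ g ∈ H.edges,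
              g = (a, b, c) ∨ g = (a, q, r) ∨ g = (x1, b, r) ∨ g = (x1, q, c) := by
            intro g hg
            obtain ⟨u, v, w⟩ := g
            by_cases hua : a = u
            · subst hua
              rcases hsh (a, v, w) hg (x1, b, r) hg1 with h' | h' | h'
              · exact absurd (h' : a = x1).symm hx1a
              · have hv : b = v := (h' : v = b).symm
                subst hv
                rcases hsh (a, b, w) hg (x1, q, c) hg2 with h2 | h2 | h2
                · exact absurd (h2 : a = x1).symm hx1a
                · exact absurd (h2 : b = q).symm hqb
                · have hw : c = w := (h2 : w = c).symm
                  subst hw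
                  exact Or.inl rfl
              · have hw : r = w := (h' : w = r).symm
                subst hw
                rcases hsh (a, v, r) hg (x1, q, c) hg2 with h2 | h2 | h2
                · exact absurd (h2 : a = x1).symm hx1a
                · have hv : q = v := (h2 : v = q).symm
                  subst hv
                  exact Or.inr (Or.inl rfl)
                · exact absurd (h2 : r = c) hrc
            · have hua' : u ≠ a := fun h => hua h.symm
              rcases hclass (u, v, w) hg hua' with ⟨h1', h2'⟩ | ⟨h1', h2'⟩
              · have hv : b = v := (h1' : v = b).symm
                subst hv
                have hw : r = w := (h2' : w = r).symm
                subst hw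
                rcases hsh (u, b, r) hg (x1, q, c) hg2 with h2 | h2 | h2
                · have hu : x1 = u := (h2 : u = x1).symm
                  subst hu
                  exact Or.inr (Or.inr (Or.inl rfl))
                · exact absurd (h2 : b = q).symm hqb
                · exact absurd (h2 : r = c) hrc
              · have hv : q = v := (h1' : v = q).symm
                subst hv
                have hw : c = w := (h2' : w = c).symm
                subst hw
                rcases hsh (u, q, c) hg (x1, b, r) hg1 with h2 | h2 | h2
                · have hu : x1 = u := (h2 : u = x1).symm
                  subst hu
                  exact Or.inr (Or.inr (Or.inr rfl))
                · exact absurd (h2 : q = b) hqb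
                · exact absurd (h2 : c = r).symm hrc
          have hsub : ∀ g : α × α × α,
              g = (a, b, c) ∨ g = (a, q, r) ∨ g = (x1, b, r) ∨ g = (x1, q, c) →
              evset g ⊆ ({a, b, c, x1, q, r} : Finset α) := by
            rintro g (rfl | rfl | rfl | rfl) <;>
              · intro v hv
                rcases mem_evset'.mp hv with rfl | rfl | rfl <;> simp
          have hmf : IsMultiFano H ({a, b, c, x1, q, r} : Finset α) := by
            refine ⟨a, b, c, x1, q, r, ha, hx1V, hb, hy2, hc, hz3,
              hx1a.symm, hqb.symm, hrc.symm, rfl, ?_⟩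
            ext e
            simp only [inducedEdges, Multiset.mem_toFinset, Multiset.mem_filter]
            constructor
            · rintro ⟨he, -⟩
              rcases hcl4 e he with rfl | rfl | rfl | rfl <;> simp [FanoEdges]
            · intro he
              simp only [FanoEdges, Finset.mem_insert, Finset.mem_singleton] at he
              rcases he with rfl | rfl | rfl | rfl
              · exact ⟨he0, hsub _ (Or.inl rfl)⟩
              · exact ⟨hf0, hsub _ (Or.inr (Or.inl rfl))⟩
              · exact ⟨hg1, hsub _ (Or.inr (Or.inr (Or.inl rfl)))⟩
              · exact ⟨hg2, hsub _ (Or.inr (Or.inr (Or.inr rfl)))⟩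
          exact homebase_F' H hnu hmf (fun e he => hsub e (hcl4 e he))
        · -- R = {a, b, r}
          have hall1 : ∀ g ∈ H.edges, g.1 ≠ a → g.2.1 = b ∧ g.2.2 = r := by
            intro g hg hga
            rcases hclass g hg hga with h' | ⟨h1', _⟩
            · exact h'
            · exact absurd ⟨g, hg, hga, h1'⟩ ht2
          have hcov : ∀ e ∈ H.edges, 2 ≤ (evset e ∩ ({a, b, r} : Finset α)).card := by
            intro e he
            by_cases hea : e.1 = a
            · rcases hsh e he (x1, b, r) hg1 with h' | h' | h'
              · exact absurd (hea.symm.trans h').symm hx1a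
              · refine two_mem' (Finset.mem_inter.mpr
                  ⟨mem_evset'.mpr (Or.inl hea.symm), by simp⟩)
                  (Finset.mem_inter.mpr
                  ⟨mem_evset'.mpr (Or.inr (Or.inl (h' : e.2.1 = b).symm)), by simp⟩)
                  (ne12' H ha hb)
              · exact two_mem' (Finset.mem_inter.mpr
                  ⟨mem_evset'.mpr (Or.inl hea.symm), by simp⟩)
                  (Finset.mem_inter.mpr
                  ⟨mem_evset'.mpr (Or.inr (Or.inr (h' : e.2.2 = r).symm)), by simp⟩)
                  (ne13' H ha hz3)
            · obtain ⟨h1', h2'⟩ := hall1 e he hea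
              exact two_mem' (Finset.mem_inter.mpr
                ⟨mem_evset'.mpr (Or.inr (Or.inl h1'.symm)), by simp⟩)
                (Finset.mem_inter.mpr
                ⟨mem_evset'.mpr (Or.inr (Or.inr h2'.symm)), by simp⟩)
                (ne23' H hb hz3)
          exact homebase_R' H hnu ha hb hz3 hcov hx1V hy2 hc
            hx1a hqb hrc.symm
            ⟨(x1, b, r), hg1, mem_evset'.mpr (Or.inl rfl), hcov _ hg1⟩
            ⟨(a, q, r), hf0, mem_evset'.mpr (Or.inr (Or.inl rfl)), hcov _ hf0⟩
            ⟨(a, b, c), he0, mem_evset'.mpr (Or.inr (Or.inr rfl)), hcov _ he0⟩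
      · -- no type-1 edge: every a-avoiding edge is (·, q, c); R = {a, q, c}
        have hall2 : ∀ g ∈ H.edges, g.1 ≠ a → g.2.1 = q ∧ g.2.2 = c := by
          intro g hg hga
          rcases hclass g hg hga with ⟨h1', _⟩ | h'
          · exact absurd ⟨g, hg, hga, h1'⟩ ht1
          · exact h'
        obtain ⟨g0, hg0, hg0a⟩ := nocov' H htau a
        have hg0a' : g0.1 ≠ a := fun h => hg0a (mem_evset'.mpr (Or.inl h.symm))
        have hx2V : g0.1 ∈ H.V1 := H.mem1 _ hg0
        have hcov : ∀ e ∈ H.edges, 2 ≤ (evset e ∩ ({a, q, c} : Finset α)).card := by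
          intro e he
          by_cases hea : e.1 = a
          · rcases hsh e he g0 hg0 with h' | h' | h'
            · exact absurd (hea.symm.trans h').symm hg0a'
            · have h1' : e.2.1 = q := h'.trans (hall2 g0 hg0 hg0a').1
              refine two_mem' (Finset.mem_inter.mpr
                ⟨mem_evset'.mpr (Or.inl hea.symm), by simp⟩)
                (Finset.mem_inter.mpr
                ⟨mem_evset'.mpr (Or.inr (Or.inl h1'.symm)), by simp⟩)
                (ne12' H ha hy2)
            · have h1' : e.2.2 = c := h'.trans (hall2 g0 hg0 hg0a').2
              exact two_mem' (Finset.mem_inter.mpr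
                ⟨mem_evset'.mpr (Or.inl hea.symm), by simp⟩)
                (Finset.mem_inter.mpr
                ⟨mem_evset'.mpr (Or.inr (Or.inr h1'.symm)), by simp⟩)
                (ne13' H ha hc)
          · obtain ⟨h1', h2'⟩ := hall2 e he hea
            exact two_mem' (Finset.mem_inter.mpr
              ⟨mem_evset'.mpr (Or.inr (Or.inl h1'.symm)), by simp⟩)
              (Finset.mem_inter.mpr
              ⟨mem_evset'.mpr (Or.inr (Or.inr h2'.symm)), by simp⟩)
              (ne23' H hy2 hc)
        exact homebase_R' H hnu ha hy2 hc hcov hx2V hb hz3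
          hg0a' hqb.symm hrc
          ⟨g0, hg0, mem_evset'.mpr (Or.inl rfl), hcov _ hg0⟩
          ⟨(a, b, c), he0, mem_evset'.mpr (Or.inr (Or.inl rfl)), hcov _ he0⟩
          ⟨(a, q, r), hf0, mem_evset'.mpr (Or.inr (Or.inr rfl)), hcov _ hf0⟩
    · -- B2 : shared vertex in class 2, f0 = (p, b, r)
      have hqb : b = q := hco
      subst hqb
      have hpa : p ≠ a := fun h =>
        ne12' H ha hb
          (hone' a b (mem_evset'.mpr (Or.inl h.symm)) (by simp)
            (mem_evset'.mpr (Or.inr (Or.inl rfl))) (by simp))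
      have hrc : r ≠ c := fun h =>
        ne23' H hb hc
          (hone' b c (mem_evset'.mpr (Or.inr (Or.inl rfl))) (by simp)
            (mem_evset'.mpr (Or.inr (Or.inr h.symm))) (by simp))
      have hx1V : p ∈ H.V1 := H.mem1 _ hf0
      have hz3 : r ∈ H.V3 := H.mem3 _ hf0
      have hclass : ∀ g ∈ H.edges, g.2.1 ≠ b →
          (g.1 = a ∧ g.2.2 = r) ∨ (g.1 = p ∧ g.2.2 = c) := by
        intro g hg hgb
        rcases hsh g hg (a, b, c) he0 with h1 | h1 | h1
        · refine Or.inl ⟨h1, ?_⟩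
          rcases hsh g hg (p, b, r) hf0 with h2 | h2 | h2
          · exact absurd (h1.symm.trans h2).symm hpa
          · exact absurd h2 hgb
          · exact h2
        · exact absurd h1 hgb
        · rcases hsh g hg (p, b, r) hf0 with h2 | h2 | h2
          · exact Or.inr ⟨h2, h1⟩
          · exact absurd h2 hgb
          · exact absurd (h2.symm.trans h1) hrc
      by_cases ht1 : ∃ g ∈ H.edges, g.2.1 ≠ b ∧ g.1 = a
      · obtain ⟨g1, hg1, hg1b, hg1a⟩ := ht1
        obtain ⟨u1, y1, t1⟩ := g1
        have hu1 : a = u1 := (hg1a : u1 = a).symm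
        subst hu1
        have hy1b : y1 ≠ b := hg1b
        have ht1r : r = t1 := by
          rcases hclass (a, y1, t1) hg1 hy1b with ⟨_, h'⟩ | ⟨h', _⟩
          · exact (h' : t1 = r).symm
          · exact absurd (h' : a = p).symm hpa
        subst ht1r
        have hy2' : y1 ∈ H.V2 := H.mem2 _ hg1
        by_cases ht2 : ∃ g ∈ H.edges, g.2.1 ≠ b ∧ g.1 = p
        · -- Fano case
          obtain ⟨g2, hg2, hg2b, hg2p⟩ := ht2
          obtain ⟨u2, y2, t2⟩ := g2
          have hu2 : p = u2 := (hg2p : u2 = p).symm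
          subst hu2
          have hy2b : y2 ≠ b := hg2b
          have ht2c : c = t2 := by
            rcases hclass (p, y2, t2) hg2 hy2b with ⟨h', _⟩ | ⟨_, h'⟩
            · exact absurd (h' : p = a) hpa
            · exact (h' : t2 = c).symm
          subst ht2c
          have hy12 : y1 = y2 := by
            rcases hsh (a, y1, r) hg1 (p, y2, c) hg2 with h' | h' | h'
            · exact absurd (h' : a = p).symm hpa
            · exact h'
            · exact absurd (h' : r = c) hrc
          subst hy12
          have hcl4 : ∀ g ∈ H.edges,
              g = (a, b, c) ∨ g = (a, y1, r) ∨ g = (p, b, r) ∨ g = (p, y1, c) := by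
            intro g hg
            obtain ⟨u, v, w⟩ := g
            by_cases hvb : b = v
            · subst hvb
              rcases hsh (u, b, w) hg (a, y1, r) hg1 with h' | h' | h'
              · have hu : a = u := (h' : u = a).symm
                subst hu
                rcases hsh (a, b, w) hg (p, y1, c) hg2 with h2 | h2 | h2
                · exact absurd (h2 : a = p).symm hpa
                · exact absurd (h2 : b = y1).symm hy1b
                · have hw : c = w := (h2 : w = c).symm
                  subst hw
                  exact Or.inl rfl
              · exact absurd (h' : b = y1).symm hy1b
              · have hw : r = w := (h' : w = r).symm
                subst hw
                rcases hsh (u, b, r) hg (p, y1, c) hg2 with h2 | h2 | h2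
                · have hu : p = u := (h2 : u = p).symm
                  subst hu
                  exact Or.inr (Or.inr (Or.inl rfl))
                · exact absurd (h2 : b = y1).symm hy1b
                · exact absurd (h2 : r = c) hrc
            · have hvb' : v ≠ b := fun h => hvb h.symm
              rcases hclass (u, v, w) hg hvb' with ⟨h1', h2'⟩ | ⟨h1', h2'⟩
              · have hu : a = u := (h1' : u = a).symm
                subst hu
                have hw : r = w := (h2' : w = r).symm
                subst hw
                rcases hsh (a, v, r) hg (p, y1, c) hg2 with h2 | h2 | h2
                · exact absurd (h2 : a = p).symm hpa
                · have hv : y1 = v := (h2 : v = y1).symm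
                  subst hv
                  exact Or.inr (Or.inl rfl)
                · exact absurd (h2 : r = c) hrc
              · have hu : p = u := (h1' : u = p).symm
                subst hu
                have hw : c = w := (h2' : w = c).symm
                subst hw
                rcases hsh (p, v, c) hg (a, y1, r) hg1 with h2 | h2 | h2
                · exact absurd (h2 : p = a) hpa
                · have hv : y1 = v := (h2 : v = y1).symm
                  subst hv
                  exact Or.inr (Or.inr (Or.inr rfl))
                · exact absurd (h2 : c = r).symm hrc
          have hsub : ∀ g : α × α × α,
              g = (a, b, c) ∨ g = (a, y1, r) ∨ g = (p, b, r) ∨ g = (p, y1, c) →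
              evset g ⊆ ({a, b, c, p, y1, r} : Finset α) := by
            rintro g (rfl | rfl | rfl | rfl) <;>
              · intro v hv
                rcases mem_evset'.mp hv with rfl | rfl | rfl <;> simp
          have hmf : IsMultiFano H ({a, b, c, p, y1, r} : Finset α) := by
            refine ⟨a, b, c, p, y1, r, ha, hx1V, hb, hy2', hc, hz3,
              fun h => hpa h.symm, fun h => hy1b h.symm, hrc.symm, rfl, ?_⟩
            ext e
            simp only [inducedEdges, Multiset.mem_toFinset, Multiset.mem_filter]
            constructor
            · rintro ⟨he, -⟩
              rcases hcl4 e he with rfl | rfl | rfl | rfl <;> simp [FanoEdges]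
            · intro he
              simp only [FanoEdges, Finset.mem_insert, Finset.mem_singleton] at he
              rcases he with rfl | rfl | rfl | rfl
              · exact ⟨he0, hsub _ (Or.inl rfl)⟩
              · exact ⟨hg1, hsub _ (Or.inr (Or.inl rfl))⟩
              · exact ⟨hf0, hsub _ (Or.inr (Or.inr (Or.inl rfl)))⟩
              · exact ⟨hg2, hsub _ (Or.inr (Or.inr (Or.inr rfl)))⟩
          exact homebase_F' H hnu hmf (fun e he => hsub e (hcl4 e he))
        · -- R = {a, b, r}
          have hall1 : ∀ g ∈ H.edges, g.2.1 ≠ b → g.1 = a ∧ g.2.2 = r := by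
            intro g hg hgb
            rcases hclass g hg hgb with h' | ⟨h1', _⟩
            · exact h'
            · exact absurd ⟨g, hg, hgb, h1'⟩ ht2
          have hcov : ∀ e ∈ H.edges, 2 ≤ (evset e ∩ ({a, b, r} : Finset α)).card := by
            intro e he
            by_cases heb : e.2.1 = b
            · rcases hsh e he (a, y1, r) hg1 with h' | h' | h'
              · refine two_mem' (Finset.mem_inter.mpr
                  ⟨mem_evset'.mpr (Or.inl (h' : e.1 = a).symm), by simp⟩)
                  (Finset.mem_inter.mpr
                  ⟨mem_evset'.mpr (Or.inr (Or.inl heb.symm)), by simp⟩)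
                  (ne12' H ha hb)
              · exact absurd (heb.symm.trans h').symm hy1b
              · exact two_mem' (Finset.mem_inter.mpr
                  ⟨mem_evset'.mpr (Or.inr (Or.inl heb.symm)), by simp⟩)
                  (Finset.mem_inter.mpr
                  ⟨mem_evset'.mpr (Or.inr (Or.inr (h' : e.2.2 = r).symm)), by simp⟩)
                  (ne23' H hb hz3)
            · obtain ⟨h1', h2'⟩ := hall1 e he heb
              exact two_mem' (Finset.mem_inter.mpr
                ⟨mem_evset'.mpr (Or.inl h1'.symm), by simp⟩)
                (Finset.mem_inter.mpr
                ⟨mem_evset'.mpr (Or.inr (Or.inr h2'.symm)), by simp⟩)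
                (ne13' H ha hz3)
          exact homebase_R' H hnu ha hb hz3 hcov hx1V hy2' hc
            hpa hy1b hrc.symm
            ⟨(p, b, r), hf0, mem_evset'.mpr (Or.inl rfl), hcov _ hf0⟩
            ⟨(a, y1, r), hg1, mem_evset'.mpr (Or.inr (Or.inl rfl)), hcov _ hg1⟩
            ⟨(a, b, c), he0, mem_evset'.mpr (Or.inr (Or.inr rfl)), hcov _ he0⟩
      · -- every b-avoiding edge is (p, ·, c); R = {p, b, c}
        have hall2 : ∀ g ∈ H.edges, g.2.1 ≠ b → g.1 = p ∧ g.2.2 = c := by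
          intro g hg hgb
          rcases hclass g hg hgb with ⟨h1', _⟩ | h'
          · exact absurd ⟨g, hg, hgb, h1'⟩ ht1
          · exact h'
        obtain ⟨g0, hg0, hg0b⟩ := nocov' H htau b
        have hg0b' : g0.2.1 ≠ b := fun h => hg0b (mem_evset'.mpr (Or.inr (Or.inl h.symm)))
        have hw2V : g0.2.1 ∈ H.V2 := H.mem2 _ hg0
        have hcov : ∀ e ∈ H.edges, 2 ≤ (evset e ∩ ({p, b, c} : Finset α)).card := by
          intro e he
          by_cases heb : e.2.1 = b
          · rcases hsh e he g0 hg0 with h' | h' | h'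
            · have h1' : e.1 = p := h'.trans (hall2 g0 hg0 hg0b').1
              refine two_mem' (Finset.mem_inter.mpr
                ⟨mem_evset'.mpr (Or.inl h1'.symm), by simp⟩)
                (Finset.mem_inter.mpr
                ⟨mem_evset'.mpr (Or.inr (Or.inl heb.symm)), by simp⟩)
                (ne12' H hx1V hb)
            · exact absurd (heb.symm.trans h').symm hg0b'
            · have h1' : e.2.2 = c := h'.trans (hall2 g0 hg0 hg0b').2
              exact two_mem' (Finset.mem_inter.mpr
                ⟨mem_evset'.mpr (Or.inr (Or.inl heb.symm)), by simp⟩)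
                (Finset.mem_inter.mpr
                ⟨mem_evset'.mpr (Or.inr (Or.inr h1'.symm)), by simp⟩)
                (ne23' H hb hc)
          · obtain ⟨h1', h2'⟩ := hall2 e he heb
            exact two_mem' (Finset.mem_inter.mpr
              ⟨mem_evset'.mpr (Or.inl h1'.symm), by simp⟩)
              (Finset.mem_inter.mpr
              ⟨mem_evset'.mpr (Or.inr (Or.inr h2'.symm)), by simp⟩)
              (ne13' H hx1V hc)
        exact homebase_R' H hnu hx1V hb hc hcov ha hw2V hz3
          (fun h => hpa h.symm) hg0b' hrc
          ⟨(a, b, c), he0, mem_evset'.mpr (Or.inl rfl), hcov _ he0⟩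
          ⟨g0, hg0, mem_evset'.mpr (Or.inr (Or.inl rfl)), hcov _ hg0⟩
          ⟨(p, b, r), hf0, mem_evset'.mpr (Or.inr (Or.inr rfl)), hcov _ hf0⟩
    · -- B3 : shared vertex in class 3, f0 = (p, q, c)
      have hrc : c = r := hco
      subst hrc
      have hpa : p ≠ a := fun h =>
        ne13' H ha hc
          (hone' a c (mem_evset'.mpr (Or.inl h.symm)) (by simp)
            (mem_evset'.mpr (Or.inr (Or.inr rfl))) (by simp))
      have hqb : q ≠ b := fun h =>
        ne23' H hb hc
          (hone' b c (mem_evset'.mpr (Or.inr (Or.inl h.symm))) (by simp)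
            (mem_evset'.mpr (Or.inr (Or.inr rfl))) (by simp))
      have hx1V : p ∈ H.V1 := H.mem1 _ hf0
      have hy2 : q ∈ H.V2 := H.mem2 _ hf0
      have hclass : ∀ g ∈ H.edges, g.2.2 ≠ c →
          (g.1 = a ∧ g.2.1 = q) ∨ (g.1 = p ∧ g.2.1 = b) := by
        intro g hg hgc
        rcases hsh g hg (a, b, c) he0 with h1 | h1 | h1
        · refine Or.inl ⟨h1, ?_⟩
          rcases hsh g hg (p, q, c) hf0 with h2 | h2 | h2
          · exact absurd (h1.symm.trans h2).symm hpa
          · exact h2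
          · exact absurd h2 hgc
        · rcases hsh g hg (p, q, c) hf0 with h2 | h2 | h2
          · exact Or.inr ⟨h2, h1⟩
          · exact absurd (h1.symm.trans h2).symm hqb
          · exact absurd h2 hgc
        · exact absurd h1 hgc
      by_cases ht1 : ∃ g ∈ H.edges, g.2.2 ≠ c ∧ g.1 = a
      · obtain ⟨g1, hg1, hg1c, hg1a⟩ := ht1
        obtain ⟨u1, v1, z1⟩ := g1
        have hu1 : a = u1 := (hg1a : u1 = a).symm
        subst hu1
        have hz1c : z1 ≠ c := hg1c
        have hv1 : q = v1 := by
          rcases hclass (a, v1, z1) hg1 hz1c with ⟨_, h'⟩ | ⟨h', _⟩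
          · exact (h' : v1 = q).symm
          · exact absurd (h' : a = p).symm hpa
        subst hv1
        have hz3' : z1 ∈ H.V3 := H.mem3 _ hg1
        by_cases ht2 : ∃ g ∈ H.edges, g.2.2 ≠ c ∧ g.1 = p
        · -- Fano case
          obtain ⟨g2, hg2, hg2c, hg2p⟩ := ht2
          obtain ⟨u2, v2, z2⟩ := g2
          have hu2 : p = u2 := (hg2p : u2 = p).symm
          subst hu2
          have hz2c : z2 ≠ c := hg2c
          have hv2 : b = v2 := by
            rcases hclass (p, v2, z2) hg2 hz2c with ⟨h', _⟩ | ⟨_, h'⟩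
            · exact absurd (h' : p = a) hpa
            · exact (h' : v2 = b).symm
          subst hv2
          have hz12 : z1 = z2 := by
            rcases hsh (a, q, z1) hg1 (p, b, z2) hg2 with h' | h' | h'
            · exact absurd (h' : a = p).symm hpa
            · exact absurd (h' : q = b) hqb
            · exact h'
          subst hz12
          have hcl4 : ∀ g ∈ H.edges,
              g = (a, b, c) ∨ g = (a, q, z1) ∨ g = (p, b, z1) ∨ g = (p, q, c) := by
            intro g hg
            obtain ⟨u, v, w⟩ := g
            by_cases hwc : c = w
            · subst hwc
              rcases hsh (u, v, c) hg (a, q, z1) hg1 with h' | h' | h'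
              · have hu : a = u := (h' : u = a).symm
                subst hu
                rcases hsh (a, v, c) hg (p, b, z1) hg2 with h2 | h2 | h2
                · exact absurd (h2 : a = p).symm hpa
                · have hv : b = v := (h2 : v = b).symm
                  subst hv
                  exact Or.inl rfl
                · exact absurd (h2 : c = z1).symm hz1c
              · have hv : q = v := (h' : v = q).symm
                subst hv
                rcases hsh (u, q, c) hg (p, b, z1) hg2 with h2 | h2 | h2
                · have hu : p = u := (h2 : u = p).symm
                  subst hu
                  exact Or.inr (Or.inr (Or.inr rfl))
                · exact absurd (h2 : q = b) hqb
                · exact absurd (h2 : c = z1).symm hz1c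
              · exact absurd (h' : c = z1).symm hz1c
            · have hwc' : w ≠ c := fun h => hwc h.symm
              rcases hclass (u, v, w) hg hwc' with ⟨h1', h2'⟩ | ⟨h1', h2'⟩
              · have hu : a = u := (h1' : u = a).symm
                subst hu
                have hv : q = v := (h2' : v = q).symm
                subst hv
                rcases hsh (a, q, w) hg (p, b, z1) hg2 with h2 | h2 | h2
                · exact absurd (h2 : a = p).symm hpa
                · exact absurd (h2 : q = b) hqb
                · have hw : z1 = w := (h2 : w = z1).symm
                  subst hw
                  exact Or.inr (Or.inl rfl)
              · have hu : p = u := (h1' : u = p).symm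
                subst hu
                have hv : b = v := (h2' : v = b).symm
                subst hv
                rcases hsh (p, b, w) hg (a, q, z1) hg1 with h2 | h2 | h2
                · exact absurd (h2 : p = a) hpa
                · exact absurd (h2 : b = q).symm hqb
                · have hw : z1 = w := (h2 : w = z1).symm
                  subst hw
                  exact Or.inr (Or.inr (Or.inl rfl))
          have hsub : ∀ g : α × α × α,
              g = (a, b, c) ∨ g = (a, q, z1) ∨ g = (p, b, z1) ∨ g = (p, q, c) →
              evset g ⊆ ({a, b, c, p, q, z1} : Finset α) := by
            rintro g (rfl | rfl | rfl | rfl) <;>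
              · intro v hv
                rcases mem_evset'.mp hv with rfl | rfl | rfl <;> simp
          have hmf : IsMultiFano H ({a, b, c, p, q, z1} : Finset α) := by
            refine ⟨a, b, c, p, q, z1, ha, hx1V, hb, hy2, hc, hz3',
              fun h => hpa h.symm, fun h => hqb h.symm, fun h => hz1c h.symm, rfl, ?_⟩
            ext e
            simp only [inducedEdges, Multiset.mem_toFinset, Multiset.mem_filter]
            constructor
            · rintro ⟨he, -⟩
              rcases hcl4 e he with rfl | rfl | rfl | rfl <;> simp [FanoEdges]
            · intro he
              simp only [FanoEdges, Finset.mem_insert, Finset.mem_singleton] at he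
              rcases he with rfl | rfl | rfl | rfl
              · exact ⟨he0, hsub _ (Or.inl rfl)⟩
              · exact ⟨hg1, hsub _ (Or.inr (Or.inl rfl))⟩
              · exact ⟨hg2, hsub _ (Or.inr (Or.inr (Or.inl rfl)))⟩
              · exact ⟨hf0, hsub _ (Or.inr (Or.inr (Or.inr rfl)))⟩
          exact homebase_F' H hnu hmf (fun e he => hsub e (hcl4 e he))
        · -- R = {a, q, c}
          have hall1 : ∀ g ∈ H.edges, g.2.2 ≠ c → g.1 = a ∧ g.2.1 = q := by
            intro g hg hgc
            rcases hclass g hg hgc with h' | ⟨h1', _⟩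
            · exact h'
            · exact absurd ⟨g, hg, hgc, h1'⟩ ht2
          have hcov : ∀ e ∈ H.edges, 2 ≤ (evset e ∩ ({a, q, c} : Finset α)).card := by
            intro e he
            by_cases hec : e.2.2 = c
            · rcases hsh e he (a, q, z1) hg1 with h' | h' | h'
              · refine two_mem' (Finset.mem_inter.mpr
                  ⟨mem_evset'.mpr (Or.inl (h' : e.1 = a).symm), by simp⟩)
                  (Finset.mem_inter.mpr
                  ⟨mem_evset'.mpr (Or.inr (Or.inr hec.symm)), by simp⟩)
                  (ne13' H ha hc)
              · exact two_mem' (Finset.mem_inter.mpr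
                  ⟨mem_evset'.mpr (Or.inr (Or.inl (h' : e.2.1 = q).symm)), by simp⟩)
                  (Finset.mem_inter.mpr
                  ⟨mem_evset'.mpr (Or.inr (Or.inr hec.symm)), by simp⟩)
                  (ne23' H hy2 hc)
              · exact absurd (hec.symm.trans h').symm hz1c
            · obtain ⟨h1', h2'⟩ := hall1 e he hec
              exact two_mem' (Finset.mem_inter.mpr
                ⟨mem_evset'.mpr (Or.inl h1'.symm), by simp⟩)
                (Finset.mem_inter.mpr
                ⟨mem_evset'.mpr (Or.inr (Or.inl h2'.symm)), by simp⟩)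
                (ne12' H ha hy2)
          exact homebase_R' H hnu ha hy2 hc hcov hx1V hb hz3'
            hpa hqb.symm hz1c
            ⟨(p, q, c), hf0, mem_evset'.mpr (Or.inl rfl), hcov _ hf0⟩
            ⟨(a, b, c), he0, mem_evset'.mpr (Or.inr (Or.inl rfl)), hcov _ he0⟩
            ⟨(a, q, z1), hg1, mem_evset'.mpr (Or.inr (Or.inr rfl)), hcov _ hg1⟩
      · -- every c-avoiding edge is (p, b, ·); R = {p, b, c}
        have hall2 : ∀ g ∈ H.edges, g.2.2 ≠ c → g.1 = p ∧ g.2.1 = b := by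
          intro g hg hgc
          rcases hclass g hg hgc with ⟨h1', _⟩ | h'
          · exact absurd ⟨g, hg, hgc, h1'⟩ ht1
          · exact h'
        obtain ⟨g0, hg0, hg0c⟩ := nocov' H htau c
        have hg0c' : g0.2.2 ≠ c := fun h => hg0c (mem_evset'.mpr (Or.inr (Or.inr h.symm)))
        have hw3V : g0.2.2 ∈ H.V3 := H.mem3 _ hg0
        have hcov : ∀ e ∈ H.edges, 2 ≤ (evset e ∩ ({p, b, c} : Finset α)).card := by
          intro e he
          by_cases hec : e.2.2 = c
          · rcases hsh e he g0 hg0 with h' | h' | h'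
            · have h1' : e.1 = p := h'.trans (hall2 g0 hg0 hg0c').1
              refine two_mem' (Finset.mem_inter.mpr
                ⟨mem_evset'.mpr (Or.inl h1'.symm), by simp⟩)
                (Finset.mem_inter.mpr
                ⟨mem_evset'.mpr (Or.inr (Or.inr hec.symm)), by simp⟩)
                (ne13' H hx1V hc)
            · have h1' : e.2.1 = b := h'.trans (hall2 g0 hg0 hg0c').2
              exact two_mem' (Finset.mem_inter.mpr
                ⟨mem_evset'.mpr (Or.inr (Or.inl h1'.symm)), by simp⟩)
                (Finset.mem_inter.mpr
                ⟨mem_evset'.mpr (Or.inr (Or.inr hec.symm)), by simp⟩)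
                (ne23' H hb hc)
            · exact absurd (hec.symm.trans h').symm hg0c'
          · obtain ⟨h1', h2'⟩ := hall2 e he hec
            exact two_mem' (Finset.mem_inter.mpr
              ⟨mem_evset'.mpr (Or.inl h1'.symm), by simp⟩)
              (Finset.mem_inter.mpr
              ⟨mem_evset'.mpr (Or.inr (Or.inl h2'.symm)), by simp⟩)
              (ne12' H hx1V hb)
        exact homebase_R' H hnu hx1V hb hc hcov ha hy2 hw3V
          (fun h => hpa h.symm) hqb hg0c'
          ⟨(a, b, c), he0, mem_evset'.mpr (Or.inl rfl), hcov _ he0⟩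
          ⟨(p, q, c), hf0, mem_evset'.mpr (Or.inr (Or.inl rfl)), hcov _ hf0⟩
          ⟨g0, hg0, mem_evset'.mpr (Or.inr (Or.inr rfl)), hcov _ hg0⟩
end
end
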